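/- arXiv:1309.3884 — 10 statements merged into one kernel-verified Lean document; each statement's English description precedes it below -/
import Mathlib

section
/- If H is a transitive subgroup of Sym_n, then the element x_1^l is central in the monoid S_{n,l}(H). -/
/-- The rewriting relation for the permutation-relation monoid `S_{n,l}(H)`. -/
def permRel (n l : ℕ) (H : Subgroup (Equiv.Perm (Fin n))) :
    FreeMonoid (Fin n) → FreeMonoid (Fin n) → Prop := fun a b =>
  ∃ σ ∈ H, ∃ w : Fin l → Fin n,
    a = FreeMonoid.ofList (List.ofFn fun i => w i) ∧
    b = FreeMonoid.ofList (List.ofFn fun i => σ (w i))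

/-- The congruence on the free monoid generated by the permutation relations. -/
def permCon (n l : ℕ) (H : Subgroup (Equiv.Perm (Fin n))) : Con (FreeMonoid (Fin n)) :=
  conGen (permRel n l H)

/-- The monoid `S_{n,l}(H)`. -/
abbrev SM (n l : ℕ) (H : Subgroup (Equiv.Perm (Fin n))) := (permCon n l H).Quotient

/-- The generator `x_i` of `S_{n,l}(H)`. -/
def xg (n l : ℕ) (H : Subgroup (Equiv.Perm (Fin n))) (i : Fin n) : SM n l H :=
  (permCon n l H).mk' (FreeMonoid.of i)

lemma permCon_map (n l : ℕ) (H : Subgroup (Equiv.Perm (Fin n)))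
    (σ : Equiv.Perm (Fin n)) (hσ : σ ∈ H) (L : List (Fin n)) (hL : L.length = l) :
    permCon n l H (FreeMonoid.ofList L) (FreeMonoid.ofList (L.map σ)) := by
  apply ConGen.Rel.of
  refine ⟨σ, hσ, fun i => L.get (Fin.cast hL.symm i), ?_, ?_⟩
  · congr 1
    apply List.ext_getElem
    · simp [hL]
    · intro i h1 h2; simp
  · congr 1
    apply List.ext_getElem
    · simp [hL]
    · intro i h1 h2; simp

lemma mk_replicate (n l : ℕ) (H : Subgroup (Equiv.Perm (Fin n))) (i : Fin n) (k : ℕ) :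
    (permCon n l H).mk' (FreeMonoid.ofList (List.replicate k i)) = xg n l H i ^ k := by
  induction k with
  | zero => simp [FreeMonoid.ofList]; rfl
  | succ k ih =>
    rw [List.replicate_succ, pow_succ']
    rw [show FreeMonoid.ofList (i :: List.replicate k i)
        = FreeMonoid.of i * FreeMonoid.ofList (List.replicate k i) from rfl]
    rw [map_mul, ih]; rfl

lemma gen_comm (n l : ℕ) (hn : 0 < n) (hl : 2 ≤ l) (H : Subgroup (Equiv.Perm (Fin n)))
    (htrans : ∀ i j : Fin n, ∃ σ ∈ H, σ i = j) (j : Fin n) :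
    xg n l H j * xg n l H ⟨0, hn⟩ ^ l = xg n l H ⟨0, hn⟩ ^ l * xg n l H j := by
  set e : Fin n := ⟨0, hn⟩
  obtain ⟨σ, hσ, hσj⟩ := htrans j e
  have hinv : σ⁻¹ e = j := by rw [← hσj]; simp
  have hlen : (j :: List.replicate (l-1) e).length = l := by
    simp; omega
  have hlen2 : (List.replicate (l-1) (σ e) ++ [e]).length = l := by
    simp; omega
  have h1 := permCon_map n l H σ hσ _ hlen
  have h2 := permCon_map n l H σ⁻¹ (H.inv_mem hσ) _ hlen2
  have key : (permCon n l H) (FreeMonoid.ofList (j :: List.replicate l e))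
      (FreeMonoid.ofList (List.replicate l e ++ [j])) := by
    have e1 : (j :: List.replicate l e) = (j :: List.replicate (l-1) e) ++ [e] := by
      rw [show l = (l-1) + 1 by omega]
      simp [List.replicate_succ']
    have e2 : ((j :: List.replicate (l-1) e).map σ) ++ [e]
        = [e] ++ (List.replicate (l-1) (σ e) ++ [e]) := by
      simp [hσj]
    have e3 : [e] ++ (List.map (⇑σ⁻¹) (List.replicate (l-1) (σ e) ++ [e]))
        = List.replicate l e ++ [j] := by
      simp [hinv]
      rw [show l = (l-1) + 1 by omega]
      simp [List.replicate_succ]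
      exact hinv
    have s1 : (permCon n l H) (FreeMonoid.ofList (j :: List.replicate l e))
        (FreeMonoid.ofList (List.map (⇑σ) (j :: List.replicate (l-1) e) ++ [e])) := by
      rw [e1, FreeMonoid.ofList_append, FreeMonoid.ofList_append]
      exact (permCon n l H).mul h1 ((permCon n l H).refl _)
    have s2 : (permCon n l H)
        (FreeMonoid.ofList (List.map (⇑σ) (j :: List.replicate (l-1) e) ++ [e]))
        (FreeMonoid.ofList (List.replicate l e ++ [j])) := by
      rw [e2, ← e3, FreeMonoid.ofList_append, FreeMonoid.ofList_append]
      exact (permCon n l H).mul ((permCon n l H).refl _) h2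
    exact s1.trans s2
  have := (Con.eq (permCon n l H)).mpr key
  have lhs : xg n l H j * xg n l H e ^ l
      = (permCon n l H).mk' (FreeMonoid.ofList (j :: List.replicate l e)) := by
    rw [show FreeMonoid.ofList (j :: List.replicate l e)
        = FreeMonoid.of j * FreeMonoid.ofList (List.replicate l e) from rfl,
      map_mul, mk_replicate]; rfl
  have rhs : xg n l H e ^ l * xg n l H j
      = (permCon n l H).mk' (FreeMonoid.ofList (List.replicate l e ++ [j])) := by
    rw [FreeMonoid.ofList_append, map_mul, mk_replicate]
    rfl
  rw [lhs, rhs]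
  exact this

theorem x1_pow_central_of_transitive (n l : ℕ) (hn : 0 < n) (hl : 2 ≤ l) (H : Subgroup (Equiv.Perm (Fin n)))
    (htrans : ∀ i j : Fin n, ∃ σ ∈ H, σ i = j) (s : SM n l H) :
    s * xg n l H ⟨0, hn⟩ ^ l = xg n l H ⟨0, hn⟩ ^ l * s := by
  induction s using Con.induction_on with
  | H w =>
    induction w using FreeMonoid.recOn with
    | one => simp [Con.coe_one]
    | of_mul i t iht =>
      have : ((FreeMonoid.of i * t : FreeMonoid (Fin n)) : SM n l H)
          = xg n l H i * (t : SM n l H) := rfl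
      rw [this, mul_assoc, iht, ← mul_assoc, gen_comm n l hn hl H htrans i, mul_assoc]
end

section
/- In S_{n,l}(H), if x_{j_1}⋯x_{j_t} = x_{k_1}⋯x_{k_u}, then t = u and for each p ∈ {1,...,t}, the index k_p lies in the H-orbit of j_p. -/
/-- The orbit equivalence on `Fin n` induced by `H`. -/
def orbSetoid (n : ℕ) (H : Subgroup (Equiv.Perm (Fin n))) : Setoid (Fin n) where
  r i j := ∃ σ ∈ H, σ i = j
  iseqv := by
    constructor
    · exact fun i => ⟨1, H.one_mem, rfl⟩
    · rintro i j ⟨σ, hσ, rfl⟩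
      exact ⟨σ⁻¹, H.inv_mem hσ, σ.symm_apply_apply i⟩
    · rintro i j k ⟨σ, hσ, rfl⟩ ⟨τ, hτ, rfl⟩
      exact ⟨τ * σ, H.mul_mem hτ hσ, rfl⟩

theorem length_eq_and_orbit_of_word_eq (n l : ℕ) (hl : 2 ≤ l) (H : Subgroup (Equiv.Perm (Fin n)))
    (js ks : List (Fin n))
    (h : (List.map (xg n l H) js).prod = (List.map (xg n l H) ks).prod) :
    js.length = ks.length ∧
      ∀ (p : ℕ) (hp : p < js.length) (hp' : p < ks.length),
        ∃ σ ∈ H, σ (js[p]'hp) = ks[p]'hp' := by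
  set φ : FreeMonoid (Fin n) →* FreeMonoid (Quotient (orbSetoid n H)) :=
    FreeMonoid.map (Quotient.mk (orbSetoid n H)) with hφ
  have hle : permCon n l H ≤ Con.ker φ := by
    apply Con.conGen_le.mpr
    rintro a b ⟨σ, hσ, w, rfl, rfl⟩
    show φ _ = φ _
    rw [← FreeMonoid.ofList_map, ← FreeMonoid.ofList_map, List.map_ofFn, List.map_ofFn]
    have hc : (Quotient.mk (orbSetoid n H)) ∘ w
        = (Quotient.mk (orbSetoid n H)) ∘ (fun i => σ (w i)) :=
      funext fun i => Quotient.sound ⟨σ, hσ, rfl⟩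
    rw [hc]
  have key : ∀ ws : List (Fin n),
      (List.map (xg n l H) ws).prod = (permCon n l H).mk' (FreeMonoid.ofList ws) := by
    intro ws
    induction ws with
    | nil => simp [FreeMonoid.ofList_nil]
    | cons a t ih =>
      rw [List.map_cons, List.prod_cons, ih, FreeMonoid.ofList_cons, map_mul]
      rfl
  rw [key, key] at h
  have h2 : φ (FreeMonoid.ofList js) = φ (FreeMonoid.ofList ks) := by
    apply hle
    exact (Con.eq (permCon n l H)).mp h
  have h3 : js.map (Quotient.mk (orbSetoid n H)) = ks.map (Quotient.mk (orbSetoid n H)) := by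
    rw [hφ, ← FreeMonoid.ofList_map, ← FreeMonoid.ofList_map] at h2
    exact congrArg FreeMonoid.toList h2
  have hlen : js.length = ks.length := by
    have := congrArg List.length h3
    simpa using this
  refine ⟨hlen, fun p hp hp' => ?_⟩
  have : (js.map (Quotient.mk (orbSetoid n H)))[p]'(by simpa using hp)
       = (ks.map (Quotient.mk (orbSetoid n H)))[p]'(by simpa using hp') := by
    simp [h3]
  rw [List.getElem_map, List.getElem_map] at this
  exact Quotient.exact this
end

section
/- Let X_{i_1}, ..., X_{i_r} be the distinct H-orbits on {1,...,n}, with chosen representatives i_1, ..., i_r. Then the submonoid of S_{n,l}(H) generated by x_{i_1}, ..., x_{i_r} is a free monoid on the basis {x_{i_1}, ..., x_{i_r}}. -/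
theorem orbit_reps_generate_free_submonoid (n l : ℕ) (hl : 2 ≤ l) (H : Subgroup (Equiv.Perm (Fin n)))
    (r : ℕ) (reps : Fin r → Fin n)
    (horb : ∀ j : Fin n, ∃! t : Fin r, ∃ σ ∈ H, σ (reps t) = j) :
    Function.Injective (FreeMonoid.lift fun t => xg n l H (reps t)) := by
  classical
  set f : Fin n → Fin r := fun j => (horb j).choose with hf
  have hfuniq : ∀ (j : Fin n) (t : Fin r), (∃ σ ∈ H, σ (reps t) = j) → t = f j :=
    fun j t h => (horb j).choose_spec.2 t h
  have hfspec : ∀ j, ∃ σ ∈ H, σ (reps (f j)) = j := fun j => (horb j).choose_spec.1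
  have hfreps : ∀ t, f (reps t) = t :=
    fun t => (hfuniq (reps t) t ⟨1, H.one_mem, rfl⟩).symm
  have hforb : ∀ σ ∈ H, ∀ j, f (σ j) = f j := by
    intro σ hσ j
    obtain ⟨τ, hτ, hτj⟩ := hfspec j
    exact (hfuniq (σ j) (f j) ⟨σ * τ, H.mul_mem hσ hτ, by simp [hτj]⟩).symm
  set φ : FreeMonoid (Fin n) →* FreeMonoid (Fin r) :=
    FreeMonoid.lift (fun j => FreeMonoid.of (f j)) with hφ
  have hle : permCon n l H ≤ Con.ker φ := by
    rw [permCon]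
    apply Con.conGen_le.mpr
    rintro a b ⟨σ, hσ, w, ha, hb⟩
    subst ha; subst hb
    show φ _ = φ _
    have key : ∀ L : List (Fin n), φ (FreeMonoid.ofList L) = FreeMonoid.ofList (L.map f) := by
      intro L
      induction L with
      | nil => simp
      | cons a L ih =>
        rw [FreeMonoid.ofList_cons, map_mul, ih, List.map_cons, FreeMonoid.ofList_cons]
        rfl
    rw [key, key, List.map_ofFn, List.map_ofFn]
    congr 1
    congr 1
    funext i
    exact (hforb σ hσ (w i)).symm
  set g : SM n l H →* FreeMonoid (Fin r) := Con.lift _ φ hle with hg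
  have hcomp : ∀ x : FreeMonoid (Fin r),
      g ((FreeMonoid.lift fun t => xg n l H (reps t)) x) = x := by
    intro x
    have : (g.comp (FreeMonoid.lift fun t => xg n l H (reps t))) = MonoidHom.id _ := by
      apply FreeMonoid.hom_eq
      intro t
      show g ((FreeMonoid.lift fun t => xg n l H (reps t)) (FreeMonoid.of t)) = _
      rw [FreeMonoid.lift_eval_of]
      show φ (FreeMonoid.of (reps t)) = FreeMonoid.of t
      rw [hφ, FreeMonoid.lift_eval_of, hfreps]
    exact DFunLike.congr_fun this x
  intro a b hab
  rw [← hcomp a, ← hcomp b, hab]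
end

section
/- Every element s of S_{n,l}(H) of length at least l−1 can be written as s = w·x_{j_1}⋯x_{j_{l-1}} for some indices j_1, ..., j_{l-1} ∈ {1,...,n} and some element w of the free submonoid F generated by one representative from each H-orbit; moreover the factor w ∈ F is unique. -/
section Aux

variable {n l : ℕ} {H : Subgroup (Equiv.Perm (Fin n))} {r : ℕ} {reps : Fin r → Fin n}

/-- The orbit index of a letter. -/
noncomputable def orbIdx (horb : ∀ j : Fin n, ∃! t : Fin r, ∃ σ ∈ H, σ (reps t) = j)
    (j : Fin n) : Fin r := (horb j).choose

lemma orbIdx_spec (horb : ∀ j : Fin n, ∃! t : Fin r, ∃ σ ∈ H, σ (reps t) = j) (j : Fin n) :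
    ∃ σ ∈ H, σ (reps (orbIdx horb j)) = j := (horb j).choose_spec.1

lemma orbIdx_unique (horb : ∀ j : Fin n, ∃! t : Fin r, ∃ σ ∈ H, σ (reps t) = j) {j : Fin n}
    {t' : Fin r} (h : ∃ σ ∈ H, σ (reps t') = j) : t' = orbIdx horb j :=
  (horb j).choose_spec.2 t' h

lemma orbIdx_reps (horb : ∀ j : Fin n, ∃! t : Fin r, ∃ σ ∈ H, σ (reps t) = j) (i : Fin r) :
    orbIdx horb (reps i) = i :=
  (orbIdx_unique horb ⟨1, H.one_mem, by simp⟩).symm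

lemma orbIdx_apply (horb : ∀ j : Fin n, ∃! t : Fin r, ∃ σ ∈ H, σ (reps t) = j)
    {σ : Equiv.Perm (Fin n)} (hσ : σ ∈ H) (j : Fin n) :
    orbIdx horb (σ j) = orbIdx horb j := by
  obtain ⟨τ, hτ, hspec⟩ := orbIdx_spec horb j
  exact (orbIdx_unique horb ⟨σ * τ, H.mul_mem hσ hτ, by
    simp [Equiv.Perm.mul_apply, hspec]⟩).symm

/-- The congruence that identifies words with the same image under letterwise `f`. -/
def tCon (f : Fin n → Fin r) : Con (FreeMonoid (Fin n)) where
  r a b := (FreeMonoid.toList a).map f = (FreeMonoid.toList b).map f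
  iseqv := ⟨fun _ => rfl, Eq.symm, Eq.trans⟩
  mul' h1 h2 := by
    simp only [FreeMonoid.toList_mul, List.map_append]
    exact congrArg₂ (· ++ ·) h1 h2

lemma permCon_map_s4 (horb : ∀ j : Fin n, ∃! t : Fin r, ∃ σ ∈ H, σ (reps t) = j)
    {a b : FreeMonoid (Fin n)} (h : permCon n l H a b) :
    (FreeMonoid.toList a).map (orbIdx horb) = (FreeMonoid.toList b).map (orbIdx horb) := by
  have hle : permCon n l H ≤ tCon (orbIdx horb) := by
    apply Con.conGen_le.2
    rintro x y ⟨σ, hσ, w, rfl, rfl⟩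
    show List.map _ _ = List.map _ _
    simp only [FreeMonoid.toList_ofList, List.map_ofFn]
    congr 1
    funext i
    exact (orbIdx_apply horb hσ (w i)).symm
  exact hle h

lemma prod_map_xg (u : List (Fin n)) :
    (u.map (xg n l H)).prod = (permCon n l H).mk' (FreeMonoid.ofList u) := by
  induction u with
  | nil =>
    show (1 : SM n l H) = _
    rw [show FreeMonoid.ofList ([] : List (Fin n)) = 1 from rfl, map_one]
  | cons a t ihp =>
    rw [List.map_cons, List.prod_cons, ihp, xg, ← map_mul]
    rfl

lemma lift_eq (w : FreeMonoid (Fin r)) :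
    (FreeMonoid.lift fun t => xg n l H (reps t)) w =
      (permCon n l H).mk' (FreeMonoid.ofList ((FreeMonoid.toList w).map reps)) := by
  rw [FreeMonoid.lift_apply, ← prod_map_xg, List.map_map]
  rfl

lemma exist_rw (hl : 2 ≤ l) (horb : ∀ j : Fin n, ∃! t : Fin r, ∃ σ ∈ H, σ (reps t) = j) :
    ∀ m (u : List (Fin n)), u.length = m → l - 1 ≤ u.length →
    ∃ j : Fin (l - 1) → Fin n,
      permCon n l H (FreeMonoid.ofList u)
        (FreeMonoid.ofList
          (((u.take (u.length - (l - 1))).map (fun a => reps (orbIdx horb a))) ++ List.ofFn j)) := by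
  obtain ⟨k, rfl⟩ : ∃ k, l = k + 1 := ⟨l - 1, by omega⟩
  have hk : 1 ≤ k := by omega
  show ∀ m (u : List (Fin n)), u.length = m → k ≤ u.length →
    ∃ j : Fin k → Fin n,
      permCon n (k + 1) H (FreeMonoid.ofList u)
        (FreeMonoid.ofList
          (((u.take (u.length - k)).map (fun a => reps (orbIdx horb a))) ++ List.ofFn j))
  intro m
  induction m using Nat.strong_induction_on with
  | _ m ih =>
    intro u hm hu
    subst hm
    by_cases hcase : u.length < k + 1
    · -- base case : u.length = k
      have hlen : u.length = k := by omega
      refine ⟨fun i => u.get (Fin.cast hlen.symm i), ?_⟩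
      have h0 : u.length - k = 0 := by omega
      rw [h0]
      simp only [List.take_zero, List.map_nil, List.nil_append]
      have heq : List.ofFn (fun i : Fin k => u.get (Fin.cast hlen.symm i)) = u := by
        apply List.ext_getElem
        · simp [hlen]
        · intro i h1 h2
          simp [List.getElem_ofFn]
      rw [heq]
      exact (permCon n (k+1) H).refl _
    · push_neg at hcase
      have hlu : k + 1 ≤ u.length := hcase
      have hw : ∀ i : Fin (k + 1), (i : ℕ) < u.length := fun i => lt_of_lt_of_le i.isLt hlu
      set w : Fin (k + 1) → Fin n := fun i => u[(i : ℕ)]'(hw i) with hwdef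
      have htake : u.take (k + 1) = List.ofFn w := by
        apply List.ext_getElem
        · simp [hlu]
        · intro i h1 h2
          rw [List.getElem_take, List.getElem_ofFn]
      have hdec : u = List.ofFn w ++ u.drop (k + 1) := by
        rw [← htake, List.take_append_drop]
      obtain ⟨σ, hσ, hσs⟩ := orbIdx_spec horb (w 0)
      set g : Fin n → Fin n := fun a => reps (orbIdx horb a) with hg
      set u₂ : List (Fin n) :=
        (List.ofFn fun i : Fin k => σ⁻¹ (w i.succ)) ++ u.drop (k + 1) with hu₂
      have hr0 : σ⁻¹ (w 0) = g (w 0) := by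
        rw [hg]
        conv_lhs => rw [← hσs]
        rw [← Equiv.Perm.mul_apply, inv_mul_cancel, Equiv.Perm.one_apply]
      set v : List (Fin n) := (List.ofFn fun i => σ⁻¹ (w i)) ++ u.drop (k + 1) with hv
      have hrel : permRel n (k + 1) H (FreeMonoid.ofList (List.ofFn w))
          (FreeMonoid.ofList (List.ofFn fun i => σ⁻¹ (w i))) :=
        ⟨σ⁻¹, H.inv_mem hσ, w, rfl, rfl⟩
      have hstep : permCon n (k + 1) H (FreeMonoid.ofList u) (FreeMonoid.ofList v) := by
        nth_rewrite 1 [hdec]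
        exact (permCon n (k+1) H).mul (ConGen.Rel.of _ _ hrel)
          ((permCon n (k+1) H).refl (FreeMonoid.ofList (u.drop (k + 1))))
      have hvdec : v = g (w 0) :: u₂ := by
        rw [hv, List.ofFn_succ, hr0]
        rfl
      have hu₂len : u₂.length = u.length - 1 := by
        simp only [hu₂, List.length_append, List.length_ofFn, List.length_drop]
        omega
      obtain ⟨j, hj⟩ := ih (u.length - 1) (by omega) u₂ hu₂len (by omega)
      have hudec : u = w 0 :: (List.ofFn (fun i : Fin k => w i.succ) ++ u.drop (k + 1)) := by
        conv_lhs => rw [hdec, List.ofFn_succ]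
        exact List.cons_append
      have hmap2 : u₂.map g =
          (List.ofFn (fun i : Fin k => w i.succ) ++ u.drop (k + 1)).map g := by
        simp only [hu₂, List.map_append, List.map_ofFn]
        have hcg : (g ∘ fun i : Fin k => σ⁻¹ (w i.succ)) = (g ∘ fun i : Fin k => w i.succ) := by
          funext i
          show g (σ⁻¹ (w i.succ)) = g (w i.succ)
          simp only [hg]
          rw [orbIdx_apply horb (H.inv_mem hσ)]
        rw [hcg]
      have hKsucc : u.length - k = (u₂.length - k) + 1 := by omega
      have key : (u.take (u.length - k)).map g =
          g (w 0) :: (u₂.take (u₂.length - k)).map g := by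
        rw [hKsucc]
        conv_lhs => rw [hudec]
        rw [List.take_succ_cons, List.map_cons]
        congr 1
        rw [List.map_take, List.map_take, hmap2]
      refine ⟨j, ?_⟩
      have hstep2 : permCon n (k + 1) H (FreeMonoid.ofList v)
          (FreeMonoid.ofList (g (w 0) ::
            ((u₂.take (u₂.length - k)).map g ++ List.ofFn j))) := by
        rw [hvdec]
        exact (permCon n (k+1) H).mul ((permCon n (k+1) H).refl (FreeMonoid.of (g (w 0)))) hj
      have htrans := (permCon n (k+1) H).trans hstep hstep2
      have hfin : g (w 0) :: ((u₂.take (u₂.length - k)).map g ++ List.ofFn j) =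
          (u.take (u.length - k)).map g ++ List.ofFn j := by
        rw [key, List.cons_append]
      rw [hfin] at htrans
      exact htrans

end Aux

theorem normal_form_right (n l : ℕ) (hl : 2 ≤ l) (H : Subgroup (Equiv.Perm (Fin n)))
    (r : ℕ) (reps : Fin r → Fin n)
    (horb : ∀ j : Fin n, ∃! t : Fin r, ∃ σ ∈ H, σ (reps t) = j)
    (u : List (Fin n)) (hu : l - 1 ≤ u.length) :
    ∃! w : FreeMonoid (Fin r), ∃ j : Fin (l - 1) → Fin n,
      (List.map (xg n l H) u).prod =
        (FreeMonoid.lift fun t => xg n l H (reps t)) w *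
          (List.map (xg n l H) (List.ofFn j)).prod := by
  set K := u.length - (l - 1) with hK
  refine ⟨FreeMonoid.ofList ((u.take K).map (orbIdx horb)), ?_, ?_⟩
  · obtain ⟨j, hj⟩ := exist_rw hl horb u.length u rfl hu
    refine ⟨j, ?_⟩
    rw [prod_map_xg, prod_map_xg, lift_eq, ← map_mul]
    simp only [FreeMonoid.toList_ofList, List.map_map]
    exact (Con.eq _).2 hj
  · rintro w ⟨j, hw⟩
    rw [prod_map_xg, prod_map_xg, lift_eq, ← map_mul] at hw
    have hcon : permCon n l H (FreeMonoid.ofList u)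
        (FreeMonoid.ofList ((FreeMonoid.toList w).map reps) * FreeMonoid.ofList (List.ofFn j)) :=
      (Con.eq _).1 hw
    have hinv := permCon_map_s4 horb hcon
    rw [FreeMonoid.toList_ofList, FreeMonoid.toList_mul, FreeMonoid.toList_ofList,
      FreeMonoid.toList_ofList, List.map_append, List.map_map] at hinv
    have hcomp : orbIdx horb ∘ reps = id := funext (orbIdx_reps horb)
    rw [hcomp, List.map_id] at hinv
    have hlen : u.length = (FreeMonoid.toList w).length + (l - 1) := by
      have := congrArg List.length hinv
      simpa using this
    have hwl : (FreeMonoid.toList w).length = K := by omega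
    have : FreeMonoid.toList w = (u.take K).map (orbIdx horb) := by
      have h1 : (u.map (orbIdx horb)).take K = FreeMonoid.toList w := by
        rw [hinv, ← hwl, List.take_left]
      rw [List.map_take]
      exact h1.symm
    apply FreeMonoid.toList.injective
    rw [this, FreeMonoid.toList_ofList]
end

section
/- If H is a semi-regular abelian subgroup of Sym_n, then the monoid S_{n,l}(H) is cancellative (both left and right cancellative). -/
section CancelAux

variable {n : ℕ} {H : Subgroup (Equiv.Perm (Fin n))}

@[reducible]
def commGroupH (H : Subgroup (Equiv.Perm (Fin n)))
    (hab : ∀ σ ∈ H, ∀ τ ∈ H, σ * τ = τ * σ) : CommGroup ↥H :=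
  { (inferInstance : Group ↥H) with
    mul_comm := fun a b => Subtype.ext (hab a a.2 b b.2) }

variable (l : ℕ) (hab : ∀ σ ∈ H, ∀ τ ∈ H, σ * τ = τ * σ)

/-- Product of the `σ t` over the window positions `t ≤ k < t + l`. -/
def Pf (σ : ℕ → ↥H) (k : ℕ) : ↥H :=
  letI := commGroupH H hab
  ∏ t ∈ Finset.range (k + 1), if k < t + l then σ t else 1

theorem Pf_congr {σ τ : ℕ → ↥H} {k : ℕ}
    (h : ∀ t, t ≤ k → k < t + l → σ t = τ t) : Pf l hab σ k = Pf l hab τ k := by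
  letI := commGroupH H hab
  unfold Pf
  refine Finset.prod_congr rfl fun t ht => ?_
  rw [Finset.mem_range] at ht
  by_cases hc : k < t + l
  · rw [if_pos hc, if_pos hc, h t (Nat.lt_succ_iff.mp ht) hc]
  · rw [if_neg hc, if_neg hc]

theorem Pf_one (k : ℕ) : Pf l hab (fun _ => (1 : ↥H)) k = 1 := by
  letI := commGroupH H hab
  unfold Pf
  simp

theorem Pf_mul (σ τ : ℕ → ↥H) (k : ℕ) :
    Pf l hab (fun t => σ t * τ t) k = Pf l hab σ k * Pf l hab τ k := by
  letI := commGroupH H hab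
  unfold Pf
  rw [← Finset.prod_mul_distrib]
  refine Finset.prod_congr rfl fun t _ => ?_
  by_cases hc : k < t + l <;> simp [hc]

theorem Pf_inv (σ : ℕ → ↥H) (k : ℕ) :
    Pf l hab (fun t => (σ t)⁻¹) k = (Pf l hab σ k)⁻¹ := by
  letI := commGroupH H hab
  unfold Pf
  rw [← Finset.prod_inv_distrib]
  refine Finset.prod_congr rfl fun t _ => ?_
  by_cases hc : k < t + l <;> simp [hc]

theorem Pf_single (g : ↥H) (j k : ℕ) (h1 : j ≤ k) (h2 : k < j + l) :
    Pf l hab (fun t => if t = j then g else 1) k = g := by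
  letI := commGroupH H hab
  unfold Pf
  rw [Finset.prod_eq_single j]
  · simp [h2]
  · intro b _ hb
    by_cases hc : k < b + l <;> simp [hc, hb]
  · intro hj
    exact absurd (Finset.mem_range.mpr (Nat.lt_succ_of_le h1)) hj

theorem Pf_zero (σ : ℕ → ↥H) (hl : 0 < l) : Pf l hab σ 0 = σ 0 := by
  letI := commGroupH H hab
  unfold Pf
  rw [Finset.prod_range_one, if_pos (by omega)]

theorem Pf_succ (σ : ℕ → ↥H) (k : ℕ) (h0 : σ 0 = 1) :
    Pf l hab σ (k + 1) = Pf l hab (fun t => σ (t + 1)) k := by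
  letI := commGroupH H hab
  unfold Pf
  rw [Finset.prod_range_succ']
  have h1 : (if k + 1 < 0 + l then σ 0 else 1) = 1 := by
    by_cases hc : k + 1 < 0 + l <;> simp [hc, h0]
  rw [h1, mul_one]
  refine Finset.prod_congr rfl fun t _ => ?_
  by_cases hc : k < t + l
  · rw [if_pos (by omega), if_pos hc]
  · rw [if_neg (by omega), if_neg hc]

theorem Pf_shift (σ : ℕ → ↥H) (m j : ℕ)
    (h : ∀ t, t < m → m + j < t + l → σ t = 1) :
    Pf l hab σ (m + j) = Pf l hab (fun s => σ (m + s)) j := by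
  letI := commGroupH H hab
  unfold Pf
  rw [show m + j + 1 = m + (j + 1) from by omega, Finset.prod_range_add]
  have h1 : (∏ t ∈ Finset.range m, if m + j < t + l then σ t else 1) = 1 := by
    refine Finset.prod_eq_one fun t ht => ?_
    rw [Finset.mem_range] at ht
    by_cases hc : m + j < t + l
    · rw [if_pos hc, h t ht hc]
    · rw [if_neg hc]
  rw [h1, one_mul]
  refine Finset.prod_congr rfl fun s _ => ?_
  by_cases hc : j < s + l
  · rw [if_pos (by omega), if_pos hc]
  · rw [if_neg (by omega), if_neg hc]

theorem Pf_eq_single_last (hl : 0 < l) (σ : ℕ → ↥H) (m t0 : ℕ) (ht0 : t0 + l = m + 1)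
    (hsupp : ∀ t, t + l ≤ m + 1 ∨ σ t = 1) :
    Pf l hab σ m = σ t0 := by
  letI := commGroupH H hab
  unfold Pf
  rw [Finset.prod_eq_single t0]
  · rw [if_pos (by omega)]
  · intro b hb hbne
    rw [Finset.mem_range] at hb
    by_cases hc : m < b + l
    · rcases hsupp b with h | h
      · omega
      · rw [if_pos hc, h]
    · rw [if_neg hc]
  · intro hj
    exact absurd (Finset.mem_range.mpr (by omega)) hj

/-- Pointwise characterization of the congruence on words. -/
def EE (u v : List (Fin n)) : Prop :=
  ∃ σ : ℕ → ↥H,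
    (∀ t, t + l ≤ u.length ∨ σ t = 1) ∧ u.length = v.length ∧
      ∀ (k : ℕ) (hu : k < u.length) (hv : k < v.length),
        v[k] = (Pf l hab σ k : Equiv.Perm (Fin n)) u[k]

theorem EE_refl (u : List (Fin n)) : EE l hab u u :=
  ⟨fun _ => 1, fun _ => Or.inr rfl, rfl, fun k hu hv => by
    rw [Pf_one]; simp⟩

theorem EE_symm {u v : List (Fin n)} (h : EE l hab u v) : EE l hab v u := by
  obtain ⟨σ, hs, hlen, hpt⟩ := h
  refine ⟨fun t => (σ t)⁻¹, ?_, hlen.symm, ?_⟩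
  · intro t
    rw [← hlen]
    rcases hs t with h | h
    · exact Or.inl h
    · exact Or.inr (inv_eq_one.mpr h)
  · intro k hv hu
    rw [hpt k hu hv, Pf_inv]
    simp

theorem EE_trans {u v w : List (Fin n)} (h1 : EE l hab u v) (h2 : EE l hab v w) :
    EE l hab u w := by
  obtain ⟨σ, hs1, hl1, hp1⟩ := h1
  obtain ⟨τ, hs2, hl2, hp2⟩ := h2
  refine ⟨fun t => τ t * σ t, ?_, hl1.trans hl2, ?_⟩
  · intro t
    rcases hs1 t with h | h
    · exact Or.inl h
    · rcases hs2 t with h' | h'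
      · exact Or.inl (by rw [hl1]; exact h')
      · exact Or.inr (show τ t * σ t = 1 by rw [h, h', one_mul])
  · intro k hu hw
    have hv : k < v.length := hl1 ▸ hu
    rw [hp2 k hv hw, hp1 k hu hv, Pf_mul]
    simp

theorem EE_mul {u v u' v' : List (Fin n)} (h : EE l hab u v) (h' : EE l hab u' v') :
    EE l hab (u ++ u') (v ++ v') := by
  obtain ⟨σ, hs, hlen, hp⟩ := h
  obtain ⟨σ', hs', hlen', hp'⟩ := h'
  refine ⟨fun t => if t < u.length then σ t else σ' (t - u.length), ?_, by
    simp [hlen, hlen'], ?_⟩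
  · intro t
    simp only [List.length_append]
    by_cases hc : t + l ≤ u.length + u'.length
    · exact Or.inl hc
    · right
      by_cases htm : t < u.length
      · rw [if_pos htm]
        exact (hs t).resolve_left (by omega)
      · rw [if_neg htm]
        exact (hs' (t - u.length)).resolve_left (by omega)
  · intro k hu hv
    simp only [List.length_append] at hu hv
    by_cases hk : k < u.length
    · rw [List.getElem_append_left hk, List.getElem_append_left (hlen ▸ hk)]
      have hPf : Pf l hab (fun t => if t < u.length then σ t else σ' (t - u.length)) k
          = Pf l hab σ k := Pf_congr l hab fun t ht _ => if_pos (by omega)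
      rw [hPf]
      exact hp k hk (hlen ▸ hk)
    · have hk2 : u.length ≤ k := by omega
      have hk2' : v.length ≤ k := by omega
      rw [List.getElem_append_right hk2, List.getElem_append_right hk2']
      have hPf : Pf l hab (fun t => if t < u.length then σ t else σ' (t - u.length)) k
          = Pf l hab σ' (k - u.length) := by
        have hsh := Pf_shift l hab
          (fun t => if t < u.length then σ t else σ' (t - u.length)) u.length (k - u.length)
          (fun t ht hcond => show (if t < u.length then σ t else σ' (t - u.length)) = 1 by
            rw [if_pos ht]
            exact (hs t).resolve_left (by omega))
        rw [show u.length + (k - u.length) = k from by omega] at hsh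
        rw [hsh]
        refine Pf_congr l hab fun s _ _ => ?_
        show (if u.length + s < u.length then σ (u.length + s)
          else σ' (u.length + s - u.length)) = σ' s
        rw [if_neg (by omega), Nat.add_sub_cancel_left]
      rw [hPf]
      simp only [show k - v.length = k - u.length from by omega]
      exact hp' (k - u.length) (by omega) (by omega)

theorem EE_of_rel {a b : FreeMonoid (Fin n)} (h : permRel n l H a b) :
    EE l hab (FreeMonoid.toList a) (FreeMonoid.toList b) := by
  obtain ⟨σ, hσ, w, ha, hb⟩ := h
  subst ha hb
  rw [FreeMonoid.toList_ofList, FreeMonoid.toList_ofList]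
  refine ⟨fun t => if t = 0 then ⟨σ, hσ⟩ else 1, ?_, by simp, ?_⟩
  · intro t
    rcases Nat.eq_zero_or_pos t with rfl | ht
    · exact Or.inl (by simp)
    · exact Or.inr (if_neg (by omega))
  · intro k hu hv
    simp only [List.length_ofFn] at hu hv
    rw [List.getElem_ofFn, List.getElem_ofFn,
      Pf_single l hab ⟨σ, hσ⟩ 0 k (Nat.zero_le k) (by omega)]

/-- `EE` as a congruence on the free monoid. -/
def Econ : Con (FreeMonoid (Fin n)) :=
  { r := fun a b => EE l hab (FreeMonoid.toList a) (FreeMonoid.toList b),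
    iseqv := ⟨fun _ => EE_refl l hab _, fun h => EE_symm l hab h,
      fun h h' => EE_trans l hab h h'⟩,
    mul' := fun {w x y z} h h' => by
      show EE l hab (FreeMonoid.toList _) (FreeMonoid.toList _)
      rw [FreeMonoid.toList_mul, FreeMonoid.toList_mul]
      exact EE_mul l hab h h' }

theorem permCon_le_Econ : permCon n l H ≤ Econ l hab :=
  Con.conGen_le.mpr fun a b h => EE_of_rel l hab h

theorem EE_of_permCon {u v : List (Fin n)}
    (h : permCon n l H (FreeMonoid.ofList u) (FreeMonoid.ofList v)) : EE l hab u v := by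
  have hE : Econ l hab (FreeMonoid.ofList u) (FreeMonoid.ofList v) := permCon_le_Econ l hab h
  have hE' : EE l hab (FreeMonoid.toList (FreeMonoid.ofList u))
      (FreeMonoid.toList (FreeMonoid.ofList v)) := hE
  rwa [FreeMonoid.toList_ofList, FreeMonoid.toList_ofList] at hE'

theorem ofFn_split {α : Type*} (m j d : ℕ) (h : j + d ≤ m) (f : Fin m → α) :
    List.ofFn f =
      (List.ofFn fun i : Fin j => f ⟨i, by omega⟩) ++
        ((List.ofFn fun i : Fin d => f ⟨j + i, by omega⟩) ++
          List.ofFn fun i : Fin (m - (j + d)) => f ⟨j + d + i, by omega⟩) := by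
  apply List.ext_getElem
  · simp only [List.length_append, List.length_ofFn]
    omega
  · intro k h1 h2
    simp only [List.getElem_append, List.getElem_ofFn, List.length_ofFn]
    split_ifs with hc1 hc2
    · rfl
    · exact congrArg f (Fin.ext (by simp only [Fin.val_mk]; omega))
    · exact congrArg f (Fin.ext (by simp only [Fin.val_mk]; omega))

/-- The sequence of intermediate words used to realize `EE` by elementary rewrites. -/
def wseq (σ : ℕ → ↥H) (u : List (Fin n)) (j : ℕ) : List (Fin n) :=
  List.ofFn fun k : Fin u.length =>
    (Pf l hab (fun t => if t < j then σ t else 1) (k : ℕ) : Equiv.Perm (Fin n)) (u.get k)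

theorem wseq_zero (σ : ℕ → ↥H) (u : List (Fin n)) : wseq l hab σ u 0 = u := by
  unfold wseq
  have h1 : (fun t => if t < 0 then σ t else (1 : ↥H)) = fun _ => (1 : ↥H) :=
    funext fun t => if_neg (Nat.not_lt_zero t)
  rw [h1]
  simp only [Pf_one, OneMemClass.coe_one, Equiv.Perm.coe_one, id_eq]
  exact List.ofFn_get u

theorem permCon_append_middle (A C : List (Fin n)) {B B' : List (Fin n)}
    (h : permCon n l H (FreeMonoid.ofList B) (FreeMonoid.ofList B')) :
    permCon n l H (FreeMonoid.ofList (A ++ (B ++ C)))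
      (FreeMonoid.ofList (A ++ (B' ++ C))) :=
  (permCon n l H).mul ((permCon n l H).refl (FreeMonoid.ofList A))
    ((permCon n l H).mul h ((permCon n l H).refl (FreeMonoid.ofList C)))

theorem wseq_step (σ : ℕ → ↥H) (u : List (Fin n))
    (hs : ∀ t, t + l ≤ u.length ∨ σ t = 1) (j : ℕ) :
    permCon n l H (FreeMonoid.ofList (wseq l hab σ u j))
      (FreeMonoid.ofList (wseq l hab σ u (j + 1))) := by
  by_cases hσ : σ j = 1
  · have h1 : (fun t => if t < j + 1 then σ t else (1 : ↥H))
        = fun t => if t < j then σ t else 1 := by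
      funext t
      by_cases ht1 : t < j
      · rw [if_pos ht1, if_pos (by omega)]
      · by_cases ht2 : t < j + 1
        · rw [if_pos ht2, if_neg ht1, show t = j from by omega, hσ]
        · rw [if_neg ht2, if_neg ht1]
    unfold wseq
    rw [h1]
    exact (permCon n l H).refl _
  · have hjl : j + l ≤ u.length := (hs j).resolve_right hσ
    have ea := ofFn_split u.length j l hjl (fun k : Fin u.length =>
      (Pf l hab (fun t => if t < j then σ t else 1) (k : ℕ) : Equiv.Perm (Fin n)) (u.get k))
    have eb := ofFn_split u.length j l hjl (fun k : Fin u.length =>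
      (Pf l hab (fun t => if t < j + 1 then σ t else 1) (k : ℕ) : Equiv.Perm (Fin n)) (u.get k))
    unfold wseq
    rw [ea, eb]
    -- identify the three pieces of the `j+1` word
    have hA : (List.ofFn fun i : Fin j =>
        (Pf l hab (fun t => if t < j + 1 then σ t else 1) ((⟨i, by omega⟩ : Fin u.length) : ℕ) :
          Equiv.Perm (Fin n)) (u.get ⟨i, by omega⟩))
        = List.ofFn fun i : Fin j =>
        (Pf l hab (fun t => if t < j then σ t else 1) ((⟨i, by omega⟩ : Fin u.length) : ℕ) :
          Equiv.Perm (Fin n)) (u.get ⟨i, by omega⟩) := by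
      refine congrArg List.ofFn (funext fun i => ?_)
      have : Pf l hab (fun t => if t < j + 1 then σ t else 1) (i : ℕ)
          = Pf l hab (fun t => if t < j then σ t else 1) (i : ℕ) := by
        refine Pf_congr l hab fun t ht _ => ?_
        have htj : t < j := lt_of_le_of_lt ht i.isLt
        rw [if_pos htj, if_pos (by omega)]
      rw [this]
    have hC : (List.ofFn fun i : Fin (u.length - (j + l)) =>
        (Pf l hab (fun t => if t < j + 1 then σ t else 1)
          ((⟨j + l + i, by omega⟩ : Fin u.length) : ℕ) :
          Equiv.Perm (Fin n)) (u.get ⟨j + l + i, by omega⟩))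
        = List.ofFn fun i : Fin (u.length - (j + l)) =>
        (Pf l hab (fun t => if t < j then σ t else 1)
          ((⟨j + l + i, by omega⟩ : Fin u.length) : ℕ) :
          Equiv.Perm (Fin n)) (u.get ⟨j + l + i, by omega⟩) := by
      refine congrArg List.ofFn (funext fun i => ?_)
      have : Pf l hab (fun t => if t < j + 1 then σ t else 1) (j + l + (i : ℕ))
          = Pf l hab (fun t => if t < j then σ t else 1) (j + l + (i : ℕ)) := by
        refine Pf_congr l hab fun t ht hcond => ?_
        by_cases htj : t < j
        · rw [if_pos htj, if_pos (by omega)]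
        · rw [if_neg htj, if_neg (by omega)]
      rw [this]
    have hdecomp : (fun t => if t < j + 1 then σ t else (1 : ↥H))
        = fun t => (if t = j then σ j else 1) * (if t < j then σ t else 1) := by
      funext t
      rcases lt_trichotomy t j with h | h | h
      · rw [if_pos (by omega), if_neg (by omega), if_pos h, one_mul]
      · subst h
        rw [if_pos (by omega), if_pos rfl, if_neg (by omega), mul_one]
      · rw [if_neg (by omega), if_neg (by omega), if_neg (by omega), mul_one]
    have hB : (List.ofFn fun i : Fin l =>
        (Pf l hab (fun t => if t < j + 1 then σ t else 1)
          ((⟨j + i, by omega⟩ : Fin u.length) : ℕ) :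
          Equiv.Perm (Fin n)) (u.get ⟨j + i, by omega⟩))
        = List.ofFn fun i : Fin l => (σ j : Equiv.Perm (Fin n))
            ((Pf l hab (fun t => if t < j then σ t else 1)
              ((⟨j + i, by omega⟩ : Fin u.length) : ℕ) :
              Equiv.Perm (Fin n)) (u.get ⟨j + i, by omega⟩)) := by
      refine congrArg List.ofFn (funext fun i => ?_)
      rw [hdecomp, Pf_mul, Pf_single l hab (σ j) j (j + (i : ℕ)) (by omega) (by omega)]
      simp [Equiv.Perm.mul_apply]
    rw [hA, hC, hB]
    refine permCon_append_middle l _ _ ?_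
    exact ConGen.Rel.of _ _ ⟨(σ j : Equiv.Perm (Fin n)), (σ j).2,
      (fun i : Fin l =>
        (Pf l hab (fun t => if t < j then σ t else 1)
          ((⟨j + i, by omega⟩ : Fin u.length) : ℕ) :
          Equiv.Perm (Fin n)) (u.get ⟨j + i, by omega⟩)), rfl, rfl⟩

theorem permCon_of_EE {u v : List (Fin n)} (h : EE l hab u v) :
    permCon n l H (FreeMonoid.ofList u) (FreeMonoid.ofList v) := by
  obtain ⟨σ, hs, hlen, hpt⟩ := h
  have main : ∀ j, permCon n l H (FreeMonoid.ofList u)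
      (FreeMonoid.ofList (wseq l hab σ u j)) := by
    intro j
    induction j with
    | zero => rw [wseq_zero]; exact (permCon n l H).refl _
    | succ j ih => exact (permCon n l H).trans ih (wseq_step l hab σ u hs j)
  have hv : wseq l hab σ u u.length = v := by
    apply List.ext_getElem
    · simp only [wseq, List.length_ofFn]
      exact hlen
    · intro k h1 h2
      simp only [wseq, List.getElem_ofFn]
      rw [hpt k (by simpa [wseq] using h1) h2]
      have : Pf l hab (fun t => if t < u.length then σ t else 1) k = Pf l hab σ k :=
        Pf_congr l hab fun t ht _ => if_pos (by
          simp only [wseq, List.length_ofFn] at h1; omega)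
      rw [this]
      rfl
  have := main u.length
  rwa [hv] at this

variable (hsr : ∀ i : Fin n, ∀ σ ∈ H, σ i = i → σ = 1)

include hab hsr

theorem EE_cons_cancel (hl : 2 ≤ l) {i : Fin n} {u v : List (Fin n)}
    (h : EE l hab (i :: u) (i :: v)) : EE l hab u v := by
  obtain ⟨σ, hs, hlen, hpt⟩ := h
  simp only [List.length_cons] at hs hlen hpt
  have h0 : σ 0 = 1 := by
    have h00 := hpt 0 (by omega) (by omega)
    rw [Pf_zero l hab σ (by omega)] at h00
    simp only [List.getElem_cons_zero] at h00
    exact Subtype.ext (hsr i (σ 0 : Equiv.Perm (Fin n)) (σ 0).2 h00.symm)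
  refine ⟨fun t => σ (t + 1), ?_, by omega, ?_⟩
  · intro t
    rcases hs (t + 1) with h | h
    · exact Or.inl (by omega)
    · exact Or.inr h
  · intro k hu hv
    have := hpt (k + 1) (by omega) (by omega)
    simp only [List.getElem_cons_succ] at this
    rw [this, Pf_succ l hab σ k h0]

theorem EE_concat_cancel (hl : 2 ≤ l) {x : Fin n} {u v : List (Fin n)}
    (h : EE l hab (u ++ [x]) (v ++ [x])) : EE l hab u v := by
  obtain ⟨σ, hs, hlen, hpt⟩ := h
  simp only [List.length_append, List.length_cons, List.length_nil] at hs hlen hpt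
  have hm : u.length = v.length := by omega
  have hPm : Pf l hab σ u.length = 1 := by
    have hp := hpt u.length (by omega) (by omega)
    rw [List.getElem_append_right (le_refl u.length),
      List.getElem_append_right (show v.length ≤ u.length by omega)] at hp
    simp only [Nat.sub_self, show u.length - v.length = 0 from by omega,
      List.getElem_cons_zero] at hp
    exact Subtype.ext (hsr x (Pf l hab σ u.length : Equiv.Perm (Fin n))
      (Pf l hab σ u.length).2 hp.symm)
  have hs' : ∀ t, t + l ≤ u.length ∨ σ t = 1 := by
    intro t
    by_cases h1 : t + l ≤ u.length
    · exact Or.inl h1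
    · right
      rcases hs t with h2 | h2
      · have ht0 : t + l = u.length + 1 := by omega
        have := Pf_eq_single_last l hab (by omega) σ u.length t ht0 (by
          intro t'
          rcases hs t' with h3 | h3
          · exact Or.inl (by omega)
          · exact Or.inr h3)
        rw [hPm] at this
        exact this.symm
      · exact h2
  refine ⟨σ, hs', hm, ?_⟩
  intro k hu hv
  have := hpt k (by omega) (by omega)
  rwa [List.getElem_append_left hu, List.getElem_append_left hv] at this

theorem permCon_cons_cancel (hl : 2 ≤ l) {i : Fin n} {u v : List (Fin n)}
    (h : permCon n l H (FreeMonoid.ofList (i :: u)) (FreeMonoid.ofList (i :: v))) :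
    permCon n l H (FreeMonoid.ofList u) (FreeMonoid.ofList v) :=
  permCon_of_EE l hab (EE_cons_cancel l hab hsr hl (EE_of_permCon l hab h))

theorem permCon_concat_cancel (hl : 2 ≤ l) {x : Fin n} {u v : List (Fin n)}
    (h : permCon n l H (FreeMonoid.ofList (u ++ [x])) (FreeMonoid.ofList (v ++ [x]))) :
    permCon n l H (FreeMonoid.ofList u) (FreeMonoid.ofList v) :=
  permCon_of_EE l hab (EE_concat_cancel l hab hsr hl (EE_of_permCon l hab h))

theorem permCon_cancel_left (hl : 2 ≤ l) :
    ∀ (a u v : List (Fin n)),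
      permCon n l H (FreeMonoid.ofList (a ++ u)) (FreeMonoid.ofList (a ++ v)) →
        permCon n l H (FreeMonoid.ofList u) (FreeMonoid.ofList v) := by
  intro a
  induction a with
  | nil => intro u v h; simpa using h
  | cons i a' ih =>
    intro u v h
    rw [List.cons_append, List.cons_append] at h
    exact ih u v (permCon_cons_cancel l hab hsr hl h)

theorem permCon_cancel_right (hl : 2 ≤ l) :
    ∀ (a u v : List (Fin n)),
      permCon n l H (FreeMonoid.ofList (u ++ a)) (FreeMonoid.ofList (v ++ a)) →
        permCon n l H (FreeMonoid.ofList u) (FreeMonoid.ofList v) := by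
  intro a
  induction a with
  | nil => intro u v h; simpa using h
  | cons i a' ih =>
    intro u v h
    rw [show u ++ (i :: a') = (u ++ [i]) ++ a' from by simp,
      show v ++ (i :: a') = (v ++ [i]) ++ a' from by simp] at h
    exact permCon_concat_cancel l hab hsr hl (ih (u ++ [i]) (v ++ [i]) h)

end CancelAux

theorem cancellative_of_semiregular_abelian (n l : ℕ) (hl : 2 ≤ l) (H : Subgroup (Equiv.Perm (Fin n)))
    (hsr : ∀ i : Fin n, ∀ σ ∈ H, σ i = i → σ = 1)
    (hab : ∀ σ ∈ H, ∀ τ ∈ H, σ * τ = τ * σ) :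
    IsCancelMul (SM n l H) := by
  have left : ∀ a b c : SM n l H, a * b = a * c → b = c := by
    intro a b c h
    obtain ⟨x, rfl⟩ := Con.mk'_surjective a
    obtain ⟨y, rfl⟩ := Con.mk'_surjective b
    obtain ⟨z, rfl⟩ := Con.mk'_surjective c
    rw [← map_mul, ← map_mul] at h
    have h2 : permCon n l H (x * y) (x * z) := (Con.eq _).mp h
    have h3 : permCon n l H (FreeMonoid.ofList (FreeMonoid.toList x ++ FreeMonoid.toList y))
        (FreeMonoid.ofList (FreeMonoid.toList x ++ FreeMonoid.toList z)) := by
      rw [FreeMonoid.ofList_append, FreeMonoid.ofList_append,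
        FreeMonoid.ofList_toList, FreeMonoid.ofList_toList, FreeMonoid.ofList_toList]
      exact h2
    have h4 := permCon_cancel_left l hab hsr hl (FreeMonoid.toList x)
      (FreeMonoid.toList y) (FreeMonoid.toList z) h3
    rw [FreeMonoid.ofList_toList, FreeMonoid.ofList_toList] at h4
    exact (Con.eq _).mpr h4
  have right : ∀ a b c : SM n l H, a * b = c * b → a = c := by
    intro a b c h
    obtain ⟨x, rfl⟩ := Con.mk'_surjective a
    obtain ⟨y, rfl⟩ := Con.mk'_surjective b
    obtain ⟨z, rfl⟩ := Con.mk'_surjective c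
    rw [← map_mul, ← map_mul] at h
    have h2 : permCon n l H (x * y) (z * y) := (Con.eq _).mp h
    have h3 : permCon n l H (FreeMonoid.ofList (FreeMonoid.toList x ++ FreeMonoid.toList y))
        (FreeMonoid.ofList (FreeMonoid.toList z ++ FreeMonoid.toList y)) := by
      rw [FreeMonoid.ofList_append, FreeMonoid.ofList_append,
        FreeMonoid.ofList_toList, FreeMonoid.ofList_toList, FreeMonoid.ofList_toList]
      exact h2
    have h4 := permCon_cancel_right l hab hsr hl (FreeMonoid.toList y)
      (FreeMonoid.toList x) (FreeMonoid.toList z) h3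
    rw [FreeMonoid.ofList_toList, FreeMonoid.ofList_toList] at h4
    exact (Con.eq _).mpr h4
  exact @IsCancelMul.mk _ _ ⟨left⟩ ⟨fun a b c h => right b a c h⟩
end

section
/- If the monoid S_{n,l}(H) is cancellative, then H is semi-regular. -/
/-- Length-invariant congruence: related words have equal length, and short words are equal. -/
def lenCon (n l : ℕ) : Con (FreeMonoid (Fin n)) where
  r a b := (FreeMonoid.toList a).length = (FreeMonoid.toList b).length ∧
    ((FreeMonoid.toList a).length < l → a = b)
  iseqv := by
    refine ⟨fun a => ⟨rfl, fun _ => rfl⟩, fun {a b} h => ⟨h.1.symm, fun hlt => (h.2 (h.1 ▸ hlt)).symm⟩,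
      fun {a b c} h1 h2 => ⟨h1.1.trans h2.1, fun hlt => (h1.2 hlt).trans (h2.2 (h1.1 ▸ hlt))⟩⟩
  mul' := by
    rintro a b c d ⟨h1, h2⟩ ⟨h3, h4⟩
    constructor
    · simp only [FreeMonoid.toList_mul, List.length_append, h1, h3]
    · intro hlt
      simp only [FreeMonoid.toList_mul, List.length_append] at hlt
      rw [h2 (by omega), h4 (by omega)]

lemma permCon_le_lenCon (n l : ℕ) (H : Subgroup (Equiv.Perm (Fin n))) :
    permCon n l H ≤ lenCon n l := by
  refine Con.conGen_le.2 ?_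
  rintro a b ⟨σ, hσ, w, rfl, rfl⟩
  constructor
  · simp
  · simp

theorem semiregular_of_cancellative (n l : ℕ) (hl : 2 ≤ l) (H : Subgroup (Equiv.Perm (Fin n)))
    (hc : IsCancelMul (SM n l H)) :
    ∀ i : Fin n, ∀ σ ∈ H, σ i = i → σ = 1 := by
  intro i σ hσ hfix
  obtain ⟨m, rfl⟩ : ∃ m, l = m + 1 := ⟨l - 1, by omega⟩
  refine Equiv.Perm.ext fun j => ?_
  show σ j = j
  set w : Fin (m + 1) → Fin n := Fin.snoc (fun _ => i) j with hw
  have hrel : permCon n (m+1) H (FreeMonoid.ofList (List.ofFn fun k => w k))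
      (FreeMonoid.ofList (List.ofFn fun k => σ (w k))) :=
    ConGen.Rel.of _ _ ⟨σ, hσ, w, rfl, rfl⟩
  have hofn1 : (List.ofFn fun k => w k) = (List.ofFn fun _ : Fin m => i) ++ [j] := by
    rw [List.ofFn_succ']
    simp [hw, List.concat_eq_append, Fin.snoc_castSucc]
  have hofn2 : (List.ofFn fun k => σ (w k)) = (List.ofFn fun _ : Fin m => i) ++ [σ j] := by
    rw [List.ofFn_succ']
    simp [hw, List.concat_eq_append, Fin.snoc_castSucc, hfix]
  have hmul : ∀ (A : List (Fin n)) (x : Fin n),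
      FreeMonoid.ofList (A ++ [x]) = FreeMonoid.ofList A * FreeMonoid.of x := fun A x => rfl
  rw [hofn1, hofn2, hmul, hmul] at hrel
  have hq : (permCon n (m+1) H).mk' (FreeMonoid.ofList (List.ofFn fun _ : Fin m => i)) *
      (permCon n (m+1) H).mk' (FreeMonoid.of j) =
      (permCon n (m+1) H).mk' (FreeMonoid.ofList (List.ofFn fun _ : Fin m => i)) *
      (permCon n (m+1) H).mk' (FreeMonoid.of (σ j)) := by
    rw [← map_mul, ← map_mul]
    exact (Con.eq _).2 hrel
  have hgen : (permCon n (m+1) H).mk' (FreeMonoid.of j) =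
      (permCon n (m+1) H).mk' (FreeMonoid.of (σ j)) := hc.1.mul_left_cancel _ hq
  have hcon : permCon n (m+1) H (FreeMonoid.of j) (FreeMonoid.of (σ j)) := (Con.eq _).1 hgen
  have := (permCon_le_lenCon n (m+1) H hcon).2 (by simp; omega)
  have : ([j] : List (Fin n)) = [σ j] := congrArg FreeMonoid.toList this
  simpa using this.symm
end

section
/- The monoid S_{n,l}(H) is cancellative if and only if H is semi-regular and abelian. -/
namespace SMaux


variable {G : Type} [CommGroup G]

/-- product of entries of `f` at indices congruent to `r` mod `l`. -/
def resProd {l : ℕ} : ZMod l → List G → G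
  | _, [] => 1
  | r, a :: f => (if r = 0 then a else 1) * resProd (r - 1) f

@[simp] lemma resProd_nil {l : ℕ} (r : ZMod l) : resProd r ([] : List G) = 1 := rfl

lemma resProd_cons {l : ℕ} (r : ZMod l) (a : G) (f : List G) :
    resProd r (a :: f) = (if r = 0 then a else 1) * resProd (r - 1) f := rfl

lemma resProd_append {l : ℕ} (f g : List G) (r : ZMod l) :
    resProd r (f ++ g) = resProd r f * resProd (r - (f.length : ZMod l)) g := by
  induction f generalizing r with
  | nil => simp
  | cons a f ih =>
    simp only [List.cons_append, resProd_cons, ih (r - 1), List.length_cons, mul_assoc]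
    congr 2
    push_cast
    ring

@[simp] lemma resProd_replicate_one {l : ℕ} (k : ℕ) (r : ZMod l) :
    resProd r (List.replicate k (1 : G)) = 1 := by
  induction k generalizing r with
  | zero => simp
  | succ k ih => simp [List.replicate_succ, resProd_cons, ih]

lemma resProd_zipWith_mul {l : ℕ} (f g : List G) (h : f.length = g.length) (r : ZMod l) :
    resProd r (List.zipWith (· * ·) f g) = resProd r f * resProd r g := by
  induction f generalizing g r with
  | nil =>
    cases g with
    | nil => simp
    | cons b g => simp at h
  | cons a f ih =>
    cases g with
    | nil => simp at h
    | cons b g =>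
      simp only [List.zipWith_cons_cons, resProd_cons, ih g (by simpa using h) (r - 1)]
      rcases eq_or_ne r 0 with h0 | h0 <;> simp [h0, mul_mul_mul_comm]

lemma resProd_map_inv {l : ℕ} (f : List G) (r : ZMod l) :
    resProd r (f.map (·⁻¹)) = (resProd r f)⁻¹ := by
  induction f generalizing r with
  | nil => simp
  | cons a f ih =>
    simp only [List.map_cons, resProd_cons, ih (r - 1), mul_inv]
    rcases eq_or_ne r 0 with h0 | h0 <;> simp [h0, mul_comm]

lemma neg_one_val {l : ℕ} [NeZero l] : (-1 : ZMod l).val = l - 1 := by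
  have hl : 0 < l := Nat.pos_of_ne_zero (NeZero.ne l)
  have h1 : (-1 : ZMod l) = ((l - 1 : ℕ) : ZMod l) := by
    have : ((l - 1 : ℕ) : ZMod l) = (l : ℕ) - 1 := by
      push_cast [Nat.cast_sub hl]
      ring
    rw [this, ZMod.natCast_self, zero_sub]
  rw [h1, ZMod.val_cast_of_lt (by omega)]

lemma sub_one_val {l : ℕ} [NeZero l] {r : ZMod l} (h : r ≠ 0) : (r - 1).val = r.val - 1 := by
  have hv : r.val ≠ 0 := fun hc => h ((ZMod.val_eq_zero r).1 hc)
  have h1 : r - 1 = ((r.val - 1 : ℕ) : ZMod l) := by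
    conv_lhs => rw [show r = ((r.val : ℕ) : ZMod l) by simp [ZMod.natCast_val, ZMod.cast_id]]
    push_cast [Nat.cast_sub (Nat.one_le_iff_ne_zero.2 hv)]
    norm_num [ZMod.natCast_val]
  rw [h1, ZMod.val_cast_of_lt (by have := ZMod.val_lt r; omega)]

lemma resProd_small {l : ℕ} [NeZero l] (f : List G) (hf : f.length ≤ l) (r : ZMod l) :
    resProd r f = if h : r.val < f.length then f[r.val] else 1 := by
  induction f generalizing r with
  | nil => simp
  | cons a f ih =>
    rw [resProd_cons, ih (by simpa using Nat.le_of_succ_le hf) (r - 1)]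
    rcases eq_or_ne r 0 with h0 | h0
    · subst h0
      have h2 : ¬ ((0 : ZMod l) - 1).val < f.length := by
        rw [zero_sub, neg_one_val]; simp at hf; omega
      rw [zero_sub] at h2 ⊢
      simp [h2, ZMod.val_zero]
    · have hv : r.val ≠ 0 := fun hc => h0 ((ZMod.val_eq_zero r).1 hc)
      rw [sub_one_val h0]
      simp only [if_neg h0, one_mul]
      rcases Nat.lt_or_ge r.val (f.length + 1) with hlt | hge
      · rw [dif_pos (by omega), dif_pos (by simpa using hlt)]
        have : r.val = (r.val - 1) + 1 := by omega
        rw [List.getElem_cons]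
        simp [hv]
      · rw [dif_neg (by omega), dif_neg (by simp; omega)]

lemma resProd_replicate_full {l : ℕ} [NeZero l] (g : G) (r : ZMod l) :
    resProd r (List.replicate l g) = g := by
  rw [resProd_small _ (by simp)]
  have := ZMod.val_lt r
  simp [this]


section Act

variable {n : ℕ} {G : Type} [CommGroup G] (φ : G →* Equiv.Perm (Fin n))

/-- Apply a list of group elements letterwise to a word. -/
def act (f : List G) (u : List (Fin n)) : List (Fin n) :=
  List.zipWith (fun g a => φ g a) f u

@[simp] lemma act_nil (f : List G) : act φ f [] = [] := by simp [act]

@[simp] lemma act_nil' (u : List (Fin n)) : act φ [] u = [] := by simp [act]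

@[simp] lemma act_cons (g : G) (f : List G) (a : Fin n) (u : List (Fin n)) :
    act φ (g :: f) (a :: u) = φ g a :: act φ f u := rfl

lemma length_act (f : List G) (u : List (Fin n)) :
    (act φ f u).length = min f.length u.length := by simp [act]

lemma act_append (f g : List G) (x y : List (Fin n)) (h : f.length = x.length) :
    act φ (f ++ g) (x ++ y) = act φ f x ++ act φ g y :=
  List.zipWith_append h

lemma act_replicate (g : G) (k : ℕ) (u : List (Fin n)) :
    act φ (List.replicate k g) u = (u.take k).map (φ g) := by
  induction u generalizing k with
  | nil => simp
  | cons a u ih =>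
    cases k with
    | zero => simp [act]
    | succ k => simp [List.replicate_succ, ih]

lemma act_replicate_one (u : List (Fin n)) :
    act φ (List.replicate u.length (1 : G)) u = u := by
  simp [act_replicate]

lemma act_act (f g : List G) (u : List (Fin n)) (h : f.length = g.length) :
    act φ f (act φ g u) = act φ (List.zipWith (· * ·) f g) u := by
  induction f generalizing g u with
  | nil => simp
  | cons a f ih =>
    cases g with
    | nil => simp at h
    | cons b g =>
      cases u with
      | nil => simp
      | cons x u => simp [ih g u (by simpa using h)]

lemma zipWith_mul_inv (f : List G) :
    List.zipWith (· * ·) (f.map (·⁻¹)) f = List.replicate f.length 1 := by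
  induction f with
  | nil => simp
  | cons a f ih => simp [List.replicate_succ, ih]

lemma zipWith_divmul (f g : List G) (h : f.length = g.length) :
    List.zipWith (· * ·) (List.zipWith (fun a b => a * b⁻¹) f g) g = f := by
  induction f generalizing g with
  | nil => simp
  | cons a f ih =>
    cases g with
    | nil => simp at h
    | cons b g => simp [ih g (by simpa using h)]

end Act

section NRel

variable {n l : ℕ} {G : Type} [CommGroup G] (φ : G →* Equiv.Perm (Fin n))
  {H : Subgroup (Equiv.Perm (Fin n))}

/-- The explicit congruence: `v` is obtained from `u` by a "balanced" letterwise action. -/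
def NRel (l : ℕ) (u v : List (Fin n)) : Prop :=
  ∃ f : List G, f.length = u.length ∧ (∃ c, ∀ r : ZMod l, resProd r f = c) ∧ v = act φ f u

lemma NRel_refl (u : List (Fin n)) : NRel φ l u u :=
  ⟨List.replicate u.length 1, by simp, ⟨1, fun r => by simp⟩,
    (act_replicate_one φ u).symm⟩

lemma NRel_symm {u v : List (Fin n)} : NRel φ l u v → NRel φ l v u := by
  rintro ⟨f, hlen, ⟨c, hc⟩, rfl⟩
  refine ⟨f.map (·⁻¹), by simp [length_act, hlen], ⟨c⁻¹, fun r => by simp [resProd_map_inv, hc r]⟩, ?_⟩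
  rw [act_act φ _ _ _ (by simp), zipWith_mul_inv, hlen, act_replicate_one]

lemma NRel_trans {u v w : List (Fin n)} : NRel φ l u v → NRel φ l v w → NRel φ l u w := by
  rintro ⟨f, hlen, ⟨c, hc⟩, rfl⟩ ⟨g, hlen', ⟨d, hd⟩, rfl⟩
  have h1 : g.length = f.length := by
    simp [length_act, hlen] at hlen' ⊢; omega
  refine ⟨List.zipWith (· * ·) g f, by simp [h1, hlen],
    ⟨d * c, fun r => by rw [resProd_zipWith_mul _ _ h1, hc r, hd r]⟩, ?_⟩
  rw [act_act φ _ _ _ h1]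

lemma NRel_append {u v x y : List (Fin n)} (h1 : NRel φ l u v) (h2 : NRel φ l x y) :
    NRel φ l (u ++ x) (v ++ y) := by
  obtain ⟨f, hlen, ⟨c, hc⟩, rfl⟩ := h1
  obtain ⟨g, hlen', ⟨d, hd⟩, rfl⟩ := h2
  exact ⟨f ++ g, by simp [hlen, hlen'],
    ⟨c * d, fun r => by rw [resProd_append, hc r, hd _]⟩,
    (act_append φ f g u x hlen).symm ▸ rfl⟩

/-- Soundness: the generated congruence is contained in `NRel`. -/
lemma permCon_to_NRel (hsur : ∀ σ ∈ H, ∃ g : G, φ g = σ) [NeZero l]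
    {a b : FreeMonoid (Fin n)} (h : permCon n l H a b) :
    NRel φ l a.toList b.toList := by
  induction h with
  | of a b hab =>
    obtain ⟨σ, hσ, w, rfl, rfl⟩ := hab
    obtain ⟨g, rfl⟩ := hsur σ hσ
    refine ⟨List.replicate l g, by simp, ⟨g, fun r => resProd_replicate_full g r⟩, ?_⟩
    rw [FreeMonoid.toList_ofList, FreeMonoid.toList_ofList, act_replicate]
    rw [List.take_of_length_le (by simp), List.map_ofFn]
    rfl
  | refl a => exact NRel_refl φ a.toList
  | symm _ ih => exact NRel_symm φ ih
  | trans _ _ ih1 ih2 => exact NRel_trans φ ih1 ih2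
  | mul _ _ ih1 ih2 =>
    rw [FreeMonoid.toList_mul, FreeMonoid.toList_mul]
    exact NRel_append φ ih1 ih2

/-- A single window move, as a congruence step. -/
lemma permCon_map {σ : Equiv.Perm (Fin n)} (hσ : σ ∈ H) (u : List (Fin n)) (hu : u.length = l) :
    permCon n l H (.ofList u) (.ofList (u.map σ)) := by
  subst hu
  apply ConGen.Rel.of
  refine ⟨σ, hσ, fun i : Fin u.length => u[(i : ℕ)], ?_, ?_⟩
  · rw [List.ofFn_getElem]
  · congr 1
    rw [show (fun i : Fin u.length => σ u[(i : ℕ)]) = σ ∘ (fun i : Fin u.length => u[(i : ℕ)]) from rfl,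
      ← List.map_ofFn, List.ofFn_getElem]

end NRel

section Gen

variable {n l : ℕ} {G : Type} [CommGroup G] (φ : G →* Equiv.Perm (Fin n))
  {H : Subgroup (Equiv.Perm (Fin n))}

lemma eq_neg_one_iff_val {l : ℕ} [NeZero l] (s : ZMod l) : s + 1 = 0 ↔ s.val = l - 1 := by
  constructor
  · intro h
    have : s = -1 := by linear_combination h
    rw [this, neg_one_val]
  · intro h
    have hl : 0 < l := Nat.pos_of_ne_zero (NeZero.ne l)
    have h1 : s = ((l - 1 : ℕ) : ZMod l) := by
      rw [show s = ((s.val : ℕ) : ZMod l) by simp [ZMod.natCast_val, ZMod.cast_id], h]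
    rw [h1]
    push_cast [Nat.cast_sub hl]
    simp

/-- Completeness: `NRel` is contained in the generated congruence. -/
lemma NRel_to_permCon [NeZero l] (hφ : ∀ g : G, φ g ∈ H) :
    ∀ (m : ℕ) (u : List (Fin n)) (f : List G), u.length = m → f.length = u.length →
      (∃ c, ∀ r : ZMod l, resProd r f = c) →
      permCon n l H (.ofList u) (.ofList (act φ f u)) := by
  have hl : 0 < l := Nat.pos_of_ne_zero (NeZero.ne l)
  intro m
  induction m using Nat.strong_induction_on with
  | _ m ih =>
    rintro u f hm hf ⟨c, hc⟩
    rcases lt_or_ge m l with hml | hml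
    · -- short case: f is constantly 1
      have hc1 : c = 1 := by
        have h := hc (m : ZMod l)
        rw [resProd_small f (by omega)] at h
        rw [dif_neg (by rw [ZMod.val_cast_of_lt hml]; omega)] at h
        exact h.symm
      have : act φ f u = u := by
        apply List.ext_getElem (by simp [length_act, hf])
        intro j h1 h2
        have hj : f[j]'(by omega) = 1 := by
          have h := hc (j : ZMod l)
          rw [resProd_small f (by omega),
            dif_pos (by rw [ZMod.val_cast_of_lt (by omega)]; omega)] at h
          rw [hc1] at h
          convert h using 2
          rw [ZMod.val_cast_of_lt (by omega)]
        simp only [act, List.getElem_zipWith]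
        rw [hj]
        simp
      rw [this]
      exact ConGen.Rel.refl _
    · -- long case
      obtain ⟨g0, ft, rfl⟩ : ∃ g0 ft, f = g0 :: ft := by
        cases f with
        | nil => simp at hf; omega
        | cons a t => exact ⟨a, t, rfl⟩
      obtain ⟨u0, ut, rfl⟩ : ∃ u0 ut, u = u0 :: ut := by
        cases u with
        | nil => simp at hm; omega
        | cons a t => exact ⟨a, t, rfl⟩
      have hft : ft.length = m - 1 := by simp at hf hm; omega
      have hut : ut.length = m - 1 := by simp at hm; omega
      have hrep : List.replicate l g0 = g0 :: List.replicate (l - 1) g0 := by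
        conv_lhs => rw [show l = (l - 1) + 1 by omega]
        rw [List.replicate_succ]
      set f1t : List G := List.replicate (l - 1) g0 ++ List.replicate (m - l) 1 with hf1t
      have hf1teq : (g0 :: f1t : List G) = List.replicate l g0 ++ List.replicate (m - l) 1 := by
        rw [hrep]; rfl
      have hf1tlen : f1t.length = m - 1 := by simp [hf1t]; omega
      -- the first window move
      have hu1eq : act φ (g0 :: f1t) (u0 :: ut) =
          (((u0 :: ut) : List (Fin n)).take l).map (φ g0) ++ ((u0 :: ut) : List (Fin n)).drop l := by
        rw [hf1teq]
        conv_lhs => rw [← List.take_append_drop l (u0 :: ut)]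
        rw [act_append φ _ _ _ _ (by simp; omega)]
        congr 1
        · rw [act_replicate, List.take_take]
          simp
        · rw [act_replicate, List.take_of_length_le (by simp at hm ⊢; omega)]
          simp
      have step1 : permCon n l H (.ofList (u0 :: ut)) (.ofList (act φ (g0 :: f1t) (u0 :: ut))) := by
        rw [hu1eq]
        conv_lhs => rw [← List.take_append_drop l (u0 :: ut)]
        rw [FreeMonoid.ofList_append, FreeMonoid.ofList_append]
        exact Con.mul _ (permCon_map (hφ g0) _ (by simp at hm ⊢; omega)) (ConGen.Rel.refl _)
      -- the remaining letterwise action on the tail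
      set h' : List G := List.zipWith (fun a b => a * b⁻¹) ft f1t with hh'
      have hh'len : h'.length = m - 1 := by simp [hh', hft, hf1tlen]
      have hbal' : ∀ s : ZMod l, resProd s h' = c * g0⁻¹ := by
        intro s
        have hcs := hc (s + 1)
        rw [resProd_cons] at hcs
        have hs1 : s + 1 - 1 = s := by ring
        rw [hs1] at hcs
        have hft' : resProd s ft = (if s + 1 = 0 then g0 else 1)⁻¹ * c := by
          rw [← hcs, inv_mul_cancel_left]
        have hf1t' : resProd s f1t = if s.val < l - 1 then g0 else 1 := by
          rw [hf1t, resProd_append, resProd_replicate_one, mul_one,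
            resProd_small _ (by simp only [List.length_replicate]; omega)]
          by_cases hs : s.val < l - 1
          · rw [dif_pos (by simpa using hs), if_pos hs, List.getElem_replicate]
          · rw [dif_neg (by simpa using hs), if_neg hs]
        rw [hh', ← List.zipWith_map_right (l₁ := ft) (l₂ := f1t) (f := (·⁻¹)) (g := (· * ·)),
          resProd_zipWith_mul _ _ (by simp [hft, hf1tlen]), hft', resProd_map_inv, hf1t']
        have hsv := ZMod.val_lt s
        by_cases hs : s.val = l - 1
        · rw [if_pos ((eq_neg_one_iff_val s).2 hs), if_neg (by omega)]
          simp [mul_comm]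
        · rw [if_neg (fun h => hs ((eq_neg_one_iff_val s).1 h)), if_pos (by omega)]
          simp [mul_comm]
      have hdiv : act φ h' (act φ f1t ut) = act φ ft ut := by
        rw [act_act φ _ _ _ (by rw [hh'len, hf1tlen]), hh',
          zipWith_divmul ft f1t (by rw [hft, hf1tlen])]
      have htail : permCon n l H (.ofList (act φ f1t ut)) (.ofList (act φ ft ut)) := by
        rw [← hdiv]
        exact ih (m - 1) (by omega) _ h' (by rw [length_act, hf1tlen, hut]; simp)
          (by rw [length_act, hh'len, hf1tlen, hut]; simp) ⟨c * g0⁻¹, hbal'⟩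
      have step2 : permCon n l H (.ofList (act φ (g0 :: f1t) (u0 :: ut)))
          (.ofList (act φ (g0 :: ft) (u0 :: ut))) := by
        rw [act_cons, act_cons,
          show (φ g0 u0 :: act φ f1t ut : List (Fin n)) = [φ g0 u0] ++ act φ f1t ut from rfl,
          show (φ g0 u0 :: act φ ft ut : List (Fin n)) = [φ g0 u0] ++ act φ ft ut from rfl,
          FreeMonoid.ofList_append, FreeMonoid.ofList_append]
        exact Con.mul _ (ConGen.Rel.refl _) htail
      exact (permCon n l H).trans step1 step2

end Gen

section Cancel

variable {n l : ℕ} {G : Type} [CommGroup G] (φ : G →* Equiv.Perm (Fin n))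
  {H : Subgroup (Equiv.Perm (Fin n))}

lemma NRel_cons_cancel [NeZero l] (hfree : ∀ (g : G) (x : Fin n), φ g x = x → g = 1)
    {x : Fin n} {u v : List (Fin n)} (h : NRel φ l (x :: u) (x :: v)) : NRel φ l u v := by
  obtain ⟨f, hlen, ⟨c, hc⟩, hact⟩ := h
  obtain ⟨g0, f', rfl⟩ : ∃ g0 f', f = g0 :: f' := by
    cases f with
    | nil => simp at hlen
    | cons a t => exact ⟨a, t, rfl⟩
  rw [act_cons, List.cons.injEq] at hact
  have hg0 : g0 = 1 := hfree g0 x hact.1.symm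
  refine ⟨f', by simpa using hlen, ⟨c, fun s => ?_⟩, hact.2⟩
  have := hc (s + 1)
  rw [resProd_cons, hg0] at this
  simpa using this

lemma NRel_concat_cancel [NeZero l] (hfree : ∀ (g : G) (x : Fin n), φ g x = x → g = 1)
    {x : Fin n} {u v : List (Fin n)} (h : NRel φ l (u ++ [x]) (v ++ [x])) : NRel φ l u v := by
  obtain ⟨f, hlen, ⟨c, hc⟩, hact⟩ := h
  simp only [List.length_append, List.length_singleton] at hlen
  have hfne : f ≠ [] := by intro h; rw [h] at hlen; simp at hlen
  obtain ⟨f', g, rfl⟩ : ∃ f' g, f = f' ++ [g] := by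
    refine ⟨f.dropLast, f.getLast hfne, (List.dropLast_append_getLast hfne).symm⟩
  have hflen : f'.length = u.length := by simpa using hlen
  rw [act_append φ _ _ _ _ hflen] at hact
  have hvlen : v.length = (act φ f' u).length := by
    have h1 := congrArg List.length hact
    simp at h1 ⊢
    omega
  obtain ⟨h1, h2⟩ := List.append_inj hact hvlen
  have hg : g = 1 := by
    have : φ g x = x := by
      simpa [act] using h2.symm
    exact hfree g x this
  refine ⟨f', hflen, ⟨c, fun s => ?_⟩, h1⟩
  have := hc s
  rw [resProd_append, resProd_cons, hg, resProd_nil] at this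
  simpa using this

lemma NRel_cancel_left [NeZero l] (hfree : ∀ (g : G) (x : Fin n), φ g x = x → g = 1)
    (p : List (Fin n)) {u v : List (Fin n)} (h : NRel φ l (p ++ u) (p ++ v)) : NRel φ l u v := by
  induction p with
  | nil => simpa using h
  | cons a p ih => exact ih (NRel_cons_cancel φ hfree h)

lemma NRel_cancel_right [NeZero l] (hfree : ∀ (g : G) (x : Fin n), φ g x = x → g = 1)
    (p : List (Fin n)) {u v : List (Fin n)} (h : NRel φ l (u ++ p) (v ++ p)) : NRel φ l u v := by
  induction p using List.reverseRecOn generalizing u v with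
  | nil => simpa using h
  | append_singleton p a ih =>
    rw [← List.append_assoc, ← List.append_assoc] at h
    exact ih (NRel_concat_cancel φ hfree h)

end Cancel

section Invariant

variable {n l : ℕ} {H : Subgroup (Equiv.Perm (Fin n))}

lemma permCon_invariant {a b : FreeMonoid (Fin n)} (h : permCon n l H a b) :
    a.toList.length = b.toList.length ∧ (a.toList.length < l → a = b) := by
  induction h with
  | of a b hab =>
    obtain ⟨σ, hσ, w, rfl, rfl⟩ := hab
    refine ⟨by simp, fun hlt => absurd hlt ?_⟩
    simp [FreeMonoid.toList_ofList]
  | refl a => exact ⟨rfl, fun _ => rfl⟩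
  | symm _ ih => exact ⟨ih.1.symm, fun hlt => (ih.2 (ih.1 ▸ hlt)).symm⟩
  | trans _ _ ih1 ih2 =>
    exact ⟨ih1.1.trans ih2.1, fun hlt => (ih1.2 hlt).trans (ih2.2 (ih1.1 ▸ hlt))⟩
  | mul _ _ ih1 ih2 =>
    constructor
    · simp only [FreeMonoid.toList_mul, List.length_append]
      omega
    · intro hlt
      simp only [FreeMonoid.toList_mul, List.length_append] at hlt
      rw [ih1.2 (by omega), ih2.2 (by omega)]

lemma permCon_length {a b : FreeMonoid (Fin n)} (h : permCon n l H a b) :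
    a.toList.length = b.toList.length := (permCon_invariant h).1

lemma permCon_short {a b : FreeMonoid (Fin n)} (h : permCon n l H a b)
    (hlt : a.toList.length < l) : a = b := (permCon_invariant h).2 hlt

end Invariant

end SMaux

theorem cancellative_iff_semiregular_abelian (n l : ℕ) (hl : 2 ≤ l) (H : Subgroup (Equiv.Perm (Fin n))) :
    IsCancelMul (SM n l H) ↔
      ((∀ i : Fin n, ∀ σ ∈ H, σ i = i → σ = 1) ∧
        (∀ σ ∈ H, ∀ τ ∈ H, σ * τ = τ * σ)) := by
  haveI : NeZero l := ⟨by omega⟩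
  set X : List (Fin n) → SM n l H := fun u => ((FreeMonoid.ofList u : FreeMonoid (Fin n)) : SM n l H) with hX
  have Xmul : ∀ u v : List (Fin n), X (u ++ v) = X u * X v := by
    intro u v
    rw [hX]
    show ((FreeMonoid.ofList (u ++ v) : FreeMonoid (Fin n)) : SM n l H) = _
    rw [FreeMonoid.ofList_append, Con.coe_mul]
  have Xeq : ∀ u v : List (Fin n),
      permCon n l H (.ofList u) (.ofList v) → X u = X v := fun u v h => (Con.eq _).2 h
  have XeqR : ∀ u v : List (Fin n),
      X u = X v → permCon n l H (.ofList u) (.ofList v) := fun u v h => (Con.eq _).1 h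
  constructor
  · -- cancellative → semiregular ∧ abelian
    intro hc
    have hsr : ∀ i : Fin n, ∀ σ ∈ H, σ i = i → σ = 1 := by
      intro i σ hσ hfix
      apply Equiv.ext
      intro j
      have h1 := SMaux.permCon_map (l := l) (H := H) hσ (List.replicate (l - 1) i ++ [j])
        (by simp; omega)
      rw [List.map_append, List.map_replicate, hfix] at h1
      have h2 : X (List.replicate (l - 1) i) * X [j]
          = X (List.replicate (l - 1) i) * X [σ j] := by
        rw [← Xmul, ← Xmul]
        exact Xeq _ _ (by simpa using h1)
      have h3 := hc.toIsLeftCancelMul.mul_left_cancel _ h2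
      have h4 := SMaux.permCon_short (XeqR _ _ h3) (by simp [FreeMonoid.toList_ofList]; omega)
      have h5 : ([j] : List (Fin n)) = [σ j] := by
        simpa using congrArg FreeMonoid.toList h4
      simpa using h5.symm
    refine ⟨hsr, ?_⟩
    intro σ hσ τ hτ
    rcases Nat.eq_zero_or_pos n with hn | hn
    · subst hn
      apply Equiv.ext
      intro x
      exact x.elim0
    · set i : Fin n := ⟨0, hn⟩
      -- four elementary moves
      have h1 := SMaux.permCon_map (l := l) (H := H) hσ (List.replicate l i) (by simp)
      rw [List.map_replicate] at h1
      have h2 := SMaux.permCon_map (l := l) (H := H) hτ (List.replicate (l - 1) (σ i) ++ [i])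
        (by simp; omega)
      rw [List.map_append, List.map_replicate] at h2
      have h3 := SMaux.permCon_map (l := l) (H := H) hτ (List.replicate l i) (by simp)
      rw [List.map_replicate] at h3
      have h4 := SMaux.permCon_map (l := l) (H := H) hσ (i :: List.replicate (l - 1) (τ i))
        (by simp; omega)
      rw [List.map_cons, List.map_replicate] at h4
      -- left chain
      have L : X (List.replicate l i ++ [i])
          = X [σ i] * X (List.replicate (l - 1) (τ (σ i)) ++ [τ i]) := by
        rw [Xmul, Xeq _ _ h1, show (List.replicate l (σ i) : List (Fin n))
            = [σ i] ++ List.replicate (l - 1) (σ i) by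
          conv_lhs => rw [show l = (l - 1) + 1 by omega, List.replicate_succ]
          rfl]
        rw [Xmul, mul_assoc, ← Xmul]
        congr 1
        exact Xeq _ _ (by simpa using h2)
      -- right chain
      have R : X ([i] ++ List.replicate l i)
          = X [σ i] * (X (List.replicate (l - 1) (σ (τ i))) * X [τ i]) := by
        rw [Xmul, show X (List.replicate l i) = X (List.replicate l (τ i)) from Xeq _ _ h3,
          show (List.replicate l (τ i) : List (Fin n))
            = List.replicate (l - 1) (τ i) ++ [τ i] by
          conv_lhs => rw [show l = (l - 1) + 1 by omega, List.replicate_succ']]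
        rw [Xmul, ← mul_assoc, ← Xmul]
        have : X ([i] ++ List.replicate (l - 1) (τ i)) = X (σ i :: List.replicate (l - 1) (σ (τ i))) :=
          Xeq _ _ (by simpa using h4)
        rw [this, show (σ i :: List.replicate (l - 1) (σ (τ i)) : List (Fin n))
            = [σ i] ++ List.replicate (l - 1) (σ (τ i)) from rfl, Xmul, mul_assoc]
      have hstart : (List.replicate l i ++ [i] : List (Fin n)) = [i] ++ List.replicate l i := by
        rw [← List.replicate_succ', List.singleton_append, ← List.replicate_succ]
      rw [hstart, R] at L
      have hc1 := hc.toIsLeftCancelMul.mul_left_cancel _ L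
      rw [Xmul] at hc1
      have hM := hc.toIsRightCancelMul.mul_right_cancel _ hc1.symm
      have hlists := SMaux.permCon_short (XeqR _ _ hM)
        (by simp [FreeMonoid.toList_ofList]; omega)
      have hlists' : (List.replicate (l - 1) (τ (σ i)) : List (Fin n))
          = List.replicate (l - 1) (σ (τ i)) := by
        simpa using congrArg FreeMonoid.toList hlists
      have hkey : τ (σ i) = σ (τ i) := by
        have h0 := List.getElem_of_eq hlists' (i := 0) (by simp; omega)
        simpa using h0
      have hfix : ((σ * τ)⁻¹ * (τ * σ)) i = i := by
        rw [Equiv.Perm.mul_apply,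
          show (τ * σ) i = (σ * τ) i by simp only [Equiv.Perm.mul_apply]; exact hkey,
          ← Equiv.Perm.mul_apply, inv_mul_cancel, Equiv.Perm.one_apply]
      have := hsr i ((σ * τ)⁻¹ * (τ * σ))
        (mul_mem (inv_mem (mul_mem hσ hτ)) (mul_mem hτ hσ)) hfix
      exact inv_mul_eq_one.mp this
  · -- semiregular ∧ abelian → cancellative
    rintro ⟨hsr, hab⟩
    letI : CommGroup ↥H :=
      { (inferInstance : Group ↥H) with mul_comm := fun a b => Subtype.ext (hab a a.2 b b.2) }
    set φ : ↥H →* Equiv.Perm (Fin n) := H.subtype with hφdef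
    have hfree : ∀ (g : ↥H) (x : Fin n), φ g x = x → g = 1 :=
      fun g x h => Subtype.ext (hsr x g.1 g.2 h)
    have hφ : ∀ g : ↥H, φ g ∈ H := fun g => g.2
    have hsur : ∀ σ ∈ H, ∃ g : ↥H, φ g = σ := fun σ h => ⟨⟨σ, h⟩, rfl⟩
    have key : ∀ a b c : FreeMonoid (Fin n),
        permCon n l H (a * b) (a * c) → permCon n l H b c := by
      intro a b c h
      have hN := SMaux.permCon_to_NRel φ hsur h
      rw [FreeMonoid.toList_mul, FreeMonoid.toList_mul] at hN
      have hN2 := SMaux.NRel_cancel_left φ hfree a.toList hN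
      obtain ⟨f, hlen, hbal, hact⟩ := hN2
      have hgen := SMaux.NRel_to_permCon φ hφ b.toList.length b.toList f rfl hlen hbal
      rw [← hact, FreeMonoid.ofList_toList, FreeMonoid.ofList_toList] at hgen
      exact hgen
    have keyR : ∀ a b c : FreeMonoid (Fin n),
        permCon n l H (b * a) (c * a) → permCon n l H b c := by
      intro a b c h
      have hN := SMaux.permCon_to_NRel φ hsur h
      rw [FreeMonoid.toList_mul, FreeMonoid.toList_mul] at hN
      have hN2 := SMaux.NRel_cancel_right φ hfree a.toList hN
      obtain ⟨f, hlen, hbal, hact⟩ := hN2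
      have hgen := SMaux.NRel_to_permCon φ hφ b.toList.length b.toList f rfl hlen hbal
      rw [← hact, FreeMonoid.ofList_toList, FreeMonoid.ofList_toList] at hgen
      exact hgen
    refine @IsCancelMul.mk _ _ ⟨?_⟩ ⟨?_⟩
    · intro a b c h
      induction a using Con.induction_on with
      | _ a =>
      induction b using Con.induction_on with
      | _ b =>
      induction c using Con.induction_on with
      | _ c =>
      beta_reduce at h
      rw [← Con.coe_mul, ← Con.coe_mul] at h
      exact (Con.eq _).2 (key a b c ((Con.eq _).1 h))
    · intro a b c h
      induction a using Con.induction_on with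
      | _ a =>
      induction b using Con.induction_on with
      | _ b =>
      induction c using Con.induction_on with
      | _ c =>
      beta_reduce at h
      rw [← Con.coe_mul, ← Con.coe_mul] at h
      exact (Con.eq _).2 (keyR a b c ((Con.eq _).1 h))
end

section
/- Let H be a transitive abelian subgroup of Sym_n and let G be the group of fractions of S_{n,l}(H). Then G is the semidirect product of its torsion subgroup T(G) with the infinite cyclic subgroup generated by x_1: G = T(G) ⋊ ⟨x_1⟩. -/
/-- The relators for the universal group (= group of fractions) of `S_{n,l}(H)`. -/
def permRels (n l : ℕ) (H : Subgroup (Equiv.Perm (Fin n))) : Set (FreeGroup (Fin n)) :=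
  { r | ∃ σ ∈ H, ∃ w : Fin l → Fin n,
      r = (List.ofFn fun i => FreeGroup.of (w i)).prod *
          ((List.ofFn fun i => FreeGroup.of (σ (w i))).prod)⁻¹ }

/-- The universal group (group of fractions) `G` of `S_{n,l}(H)`. -/
abbrev SG (n l : ℕ) (H : Subgroup (Equiv.Perm (Fin n))) := PresentedGroup (permRels n l H)

/-- The generator `x_i` of the group `G`. -/
def Xg (n l : ℕ) (H : Subgroup (Equiv.Perm (Fin n))) (i : Fin n) : SG n l H :=
  PresentedGroup.of i

namespace SGAux

lemma list_ofFn_if {M : Type*} [Monoid M] :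
    ∀ (l d : ℕ), d < l → ∀ (B C : M),
      (List.ofFn fun i : Fin l => if (i : ℕ) = d then B else C).prod
        = C ^ d * B * C ^ (l - 1 - d)
  | 0, d, hd, B, C => absurd hd (by omega)
  | l + 1, 0, _, B, C => by
      rw [List.ofFn_succ]
      have htail : (fun i : Fin l => if ((Fin.succ i : Fin (l+1)) : ℕ) = 0 then B else C)
          = fun _ : Fin l => C := by
        funext i; simp [Fin.val_succ]
      simp only [Fin.val_zero, if_pos rfl, htail]
      simp
  | l + 1, d + 1, hd, B, C => by
      rw [List.ofFn_succ]
      have htail : (fun i : Fin l => if ((Fin.succ i : Fin (l+1)) : ℕ) = d + 1 then B else C)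
          = fun i : Fin l => if (i : ℕ) = d then B else C := by
        funext i; simp [Fin.val_succ]
      simp only [Fin.val_zero, htail]
      simp only [show ¬ (0 = d + 1) by omega, ↓reduceIte]
      rw [List.prod_cons, list_ofFn_if l d (by omega) B C]
      have h1 : l + 1 - 1 - (d + 1) = l - 1 - d := by omega
      rw [h1, pow_succ']
      simp [mul_assoc]

variable {n l : ℕ} {H : Subgroup (Equiv.Perm (Fin n))}

lemma relw {σ : Equiv.Perm (Fin n)} (hσ : σ ∈ H) (w : Fin l → Fin n) :
    (List.ofFn fun i => Xg n l H (w i)).prod = (List.ofFn fun i => Xg n l H (σ (w i))).prod := by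
  have hmem : (List.ofFn fun i => FreeGroup.of (w i)).prod *
      ((List.ofFn fun i => FreeGroup.of (σ (w i))).prod)⁻¹ ∈
      Subgroup.normalClosure (permRels n l H) :=
    Subgroup.subset_normalClosure ⟨σ, hσ, w, rfl⟩
  have h1 : PresentedGroup.mk (permRels n l H)
      ((List.ofFn fun i => FreeGroup.of (w i)).prod *
        ((List.ofFn fun i => FreeGroup.of (σ (w i))).prod)⁻¹) = 1 :=
    (QuotientGroup.eq_one_iff _).mpr hmem
  rw [map_mul, map_inv, map_list_prod, map_list_prod, List.map_ofFn, List.map_ofFn,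
    mul_inv_eq_one] at h1
  exact h1

lemma relR {σ : Equiv.Perm (Fin n)} (hσ : σ ∈ H) (b c : Fin n) {d : ℕ} (hd : d < l) :
    Xg n l H c ^ d * Xg n l H b * Xg n l H c ^ (l - 1 - d) =
      Xg n l H (σ c) ^ d * Xg n l H (σ b) * Xg n l H (σ c) ^ (l - 1 - d) := by
  have h := relw hσ (fun i : Fin l => if (i : ℕ) = d then b else c)
  have e1 : ∀ (u v : Fin n) (i : Fin l),
      Xg n l H (if (i : ℕ) = d then u else v)
        = if (i : ℕ) = d then Xg n l H u else Xg n l H v := by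
    intro u v i; split <;> rfl
  have e2 : ∀ i : Fin l, σ (if (i : ℕ) = d then b else c)
      = if (i : ℕ) = d then σ b else σ c := by
    intro i; split <;> rfl
  simp only [e2, e1] at h
  rwa [list_ofFn_if l d hd, list_ofFn_if l d hd] at h


lemma L0 (hl : 2 ≤ l) {σ : Equiv.Perm (Fin n)} (hσ : σ ∈ H) (c : Fin n) :
    Xg n l H c ^ l = Xg n l H (σ c) ^ l := by
  have h := relR (l := l) hσ c c (d := 0) (by omega)
  simp only [pow_zero, one_mul, Nat.sub_zero] at h
  have e1 : ∀ u : Fin n, Xg n l H u * Xg n l H u ^ (l - 1) = Xg n l H u ^ l := by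
    intro u; rw [← pow_succ']; congr 1; omega
  rw [← e1 c, ← e1 (σ c), h]

lemma factA (hl : 2 ≤ l) {σ : Equiv.Perm (Fin n)} (hσ : σ ∈ H) (a c : Fin n) :
    Xg n l H a * (Xg n l H c)⁻¹ = Xg n l H (σ a) * (Xg n l H (σ c))⁻¹ := by
  have h := relR (l := l) hσ a c (d := 0) (by omega)
  simp only [pow_zero, one_mul, Nat.sub_zero] at h
  have hc : ∀ u : Fin n, (Xg n l H u)⁻¹ = Xg n l H u ^ (l - 1) * (Xg n l H u ^ l)⁻¹ := by
    intro u
    have hpow : Xg n l H u * Xg n l H u ^ (l - 1) = Xg n l H u ^ l := by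
      rw [← pow_succ']; congr 1; omega
    rw [← hpow, mul_inv_rev, mul_inv_cancel_left]
  rw [hc c, hc (σ c), ← mul_assoc, ← mul_assoc, h, L0 hl hσ c]

lemma factB (hl : 2 ≤ l) {σ : Equiv.Perm (Fin n)} (hσ : σ ∈ H) (a c : Fin n) :
    (Xg n l H c)⁻¹ * Xg n l H a = (Xg n l H (σ c))⁻¹ * Xg n l H (σ a) := by
  have h := relR (l := l) hσ a c (d := l - 1) (by omega)
  simp only [Nat.sub_self, pow_zero, mul_one] at h
  have hc : ∀ u : Fin n, (Xg n l H u)⁻¹ = (Xg n l H u ^ l)⁻¹ * Xg n l H u ^ (l - 1) := by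
    intro u
    have hpow : Xg n l H u ^ (l - 1) * Xg n l H u = Xg n l H u ^ l := by
      rw [← pow_succ]; congr 1; omega
    rw [← hpow, mul_inv_rev, inv_mul_cancel_right]
  rw [hc c, hc (σ c), mul_assoc, mul_assoc, h, L0 hl hσ c]

/-- `y_i = x_i x_e⁻¹`. -/
def Yg (n l : ℕ) (H : Subgroup (Equiv.Perm (Fin n))) (e i : Fin n) : SG n l H :=
  Xg n l H i * (Xg n l H e)⁻¹

lemma Ymul (hl : 2 ≤ l) {σ : Equiv.Perm (Fin n)} (hσ : σ ∈ H) (e b : Fin n) :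
    Yg n l H e (σ e) * Yg n l H e b = Yg n l H e (σ b) := by
  show (Xg n l H (σ e) * (Xg n l H e)⁻¹) * (Xg n l H b * (Xg n l H e)⁻¹)
      = Xg n l H (σ b) * (Xg n l H e)⁻¹
  have h := factB hl hσ b e
  rw [mul_assoc, ← mul_assoc (Xg n l H e)⁻¹, h, ← mul_assoc, ← mul_assoc,
    mul_inv_cancel, one_mul]


lemma Ycomm (hl : 2 ≤ l) (htrans : ∀ i j : Fin n, ∃ σ ∈ H, σ i = j)
    (hab : ∀ σ ∈ H, ∀ τ ∈ H, σ * τ = τ * σ) (e a b : Fin n) :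
    Commute (Yg n l H e a) (Yg n l H e b) := by
  obtain ⟨σ, hσ, hσe⟩ := htrans e a
  obtain ⟨τ, hτ, hτe⟩ := htrans e b
  have h1 : Yg n l H e (σ e) * Yg n l H e (τ e) = Yg n l H e ((σ * τ) e) := by
    rw [Ymul hl hσ]; rfl
  have h2 : Yg n l H e (τ e) * Yg n l H e (σ e) = Yg n l H e ((τ * σ) e) := by
    rw [Ymul hl hτ]; rfl
  show Yg n l H e a * Yg n l H e b = Yg n l H e b * Yg n l H e a
  rw [← hσe, ← hτe, h1, h2, hab σ hσ τ hτ]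

lemma Ypow (hl : 2 ≤ l) {σ : Equiv.Perm (Fin n)} (hσ : σ ∈ H) (e : Fin n) :
    ∀ m : ℕ, Yg n l H e (σ e) ^ m = Yg n l H e ((σ ^ m) e)
  | 0 => by
      show (1 : SG n l H) = Yg n l H e ((1 : Equiv.Perm (Fin n)) e)
      show (1 : SG n l H) = Xg n l H e * (Xg n l H e)⁻¹
      rw [mul_inv_cancel]
  | (m + 1) => by
      have hidx : (σ ^ (m + 1)) e = σ ((σ ^ m) e) := by
        rw [pow_succ']; rfl
      rw [pow_succ', Ypow hl hσ e m, Ymul hl hσ, hidx]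

lemma Ytor (hl : 2 ≤ l) (htrans : ∀ i j : Fin n, ∃ σ ∈ H, σ i = j) (e a : Fin n) :
    IsOfFinOrder (Yg n l H e a) := by
  obtain ⟨σ, hσ, hσe⟩ := htrans e a
  refine isOfFinOrder_iff_pow_eq_one.mpr ⟨orderOf σ, orderOf_pos σ, ?_⟩
  rw [← hσe, Ypow hl hσ, pow_orderOf_eq_one]
  show Xg n l H ((1 : Equiv.Perm (Fin n)) e) * (Xg n l H e)⁻¹ = 1
  rw [show (1 : Equiv.Perm (Fin n)) e = e from rfl, mul_inv_cancel]

lemma central (hl : 2 ≤ l) (htrans : ∀ i j : Fin n, ∃ σ ∈ H, σ i = j) (e i : Fin n) :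
    Xg n l H i * Xg n l H e ^ l = Xg n l H e ^ l * Xg n l H i := by
  obtain ⟨τ, hτ, hτi⟩ := htrans i e
  have h1 := relR (l := l) hτ i e (d := 0) (by omega)
  simp only [pow_zero, one_mul, Nat.sub_zero] at h1
  rw [hτi] at h1
  have h2 := relR (l := l) (H.inv_mem hτ) e (τ e) (d := l - 1) (by omega)
  simp only [Nat.sub_self, pow_zero, mul_one] at h2
  have hτ1 : τ⁻¹ (τ e) = e := Equiv.symm_apply_apply τ e
  have hτ2 : τ⁻¹ e = i := by rw [← hτi]; exact Equiv.symm_apply_apply τ i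
  rw [hτ1, hτ2] at h2
  have hsplit : Xg n l H e ^ l = Xg n l H e ^ (l - 1) * Xg n l H e := by
    rw [← pow_succ]; congr 1; omega
  have hsplit' : Xg n l H e ^ l = Xg n l H e * Xg n l H e ^ (l - 1) := by
    rw [← pow_succ']; congr 1; omega
  calc Xg n l H i * Xg n l H e ^ l
      = Xg n l H i * Xg n l H e ^ (l - 1) * Xg n l H e := by rw [hsplit, ← mul_assoc]
    _ = Xg n l H e * Xg n l H (τ e) ^ (l - 1) * Xg n l H e := by rw [h1]
    _ = Xg n l H e * (Xg n l H (τ e) ^ (l - 1) * Xg n l H e) := by rw [mul_assoc]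
    _ = Xg n l H e * (Xg n l H e ^ (l - 1) * Xg n l H i) := by rw [h2]
    _ = Xg n l H e ^ l * Xg n l H i := by rw [← mul_assoc, ← hsplit']

lemma zy (hl : 2 ≤ l) (htrans : ∀ i j : Fin n, ∃ σ ∈ H, σ i = j) (e b : Fin n) :
    Commute (Xg n l H e ^ l) (Yg n l H e b) := by
  have h1 : Commute (Xg n l H e ^ l) (Xg n l H b) := (central hl htrans e b).symm
  have h2 : Commute (Xg n l H e ^ l) (Xg n l H e) := ((Commute.refl _).pow_left l)
  exact h1.mul_right h2.inv_right

lemma GCE (hl : 2 ≤ l) (htrans : ∀ i j : Fin n, ∃ σ ∈ H, σ i = j) (e : Fin n)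
    {d : ℕ} (hd : d < l) (j b : Fin n) :
    Xg n l H e ^ d * Yg n l H e b * (Xg n l H e ^ d)⁻¹ =
      Xg n l H j ^ d * Yg n l H e b * (Xg n l H j ^ d)⁻¹ := by
  obtain ⟨σ, hσ, hσe⟩ := htrans e j
  have key : ∀ u : Fin n,
      Xg n l H u ^ (l - 1 - d) * (Xg n l H u ^ l)⁻¹ = (Xg n l H u)⁻¹ * (Xg n l H u ^ d)⁻¹ := by
    intro u
    have h : Xg n l H u ^ d * Xg n l H u * Xg n l H u ^ (l - 1 - d) = Xg n l H u ^ l := by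
      rw [← pow_succ, ← pow_add]; congr 1; omega
    rw [← h, mul_inv_rev, mul_inv_cancel_left, mul_inv_rev]
  have side : ∀ (c u : Fin n),
      Xg n l H c ^ d * (Xg n l H u * (Xg n l H c)⁻¹) * (Xg n l H c ^ d)⁻¹
        = Xg n l H c ^ d * Xg n l H u * Xg n l H c ^ (l - 1 - d) * (Xg n l H c ^ l)⁻¹ := by
    intro c u
    rw [mul_assoc (Xg n l H c ^ d * Xg n l H u), key c]
    simp [mul_assoc]
  have hY1 : Yg n l H e b = Xg n l H b * (Xg n l H e)⁻¹ := rfl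
  have hY2 : Yg n l H e b = Xg n l H (σ b) * (Xg n l H j)⁻¹ := by
    rw [← hσe]; exact factA hl hσ b e
  conv_lhs => rw [hY1]
  conv_rhs => rw [hY2]
  rw [side, side]
  have hR := relR (l := l) hσ b e hd
  rw [hσe] at hR
  have hL := L0 hl hσ e
  rw [hσe] at hL
  rw [hR, hL]

lemma KC (hl : 2 ≤ l) (htrans : ∀ i j : Fin n, ∃ σ ∈ H, σ i = j)
    (hab : ∀ σ ∈ H, ∀ τ ∈ H, σ * τ = τ * σ) (e : Fin n) {m : ℕ} (hm : m < l) (a b : Fin n) :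
    Commute (Yg n l H e a) (Xg n l H e ^ m * Yg n l H e b * (Xg n l H e ^ m)⁻¹) := by
  match m, hm with
  | 0, _ => simpa using Ycomm hl htrans hab e a b
  | (d + 1), hm =>
    have hd : d < l := by omega
    have h1 : Yg n l H e a * Xg n l H e ^ (d + 1) = Xg n l H a * Xg n l H e ^ d := by
      rw [pow_succ', ← mul_assoc]
      congr 1
      exact inv_mul_cancel_right _ _
    have hconj : Yg n l H e a * (Xg n l H e ^ (d+1) * Yg n l H e b * (Xg n l H e ^ (d+1))⁻¹)
          * (Yg n l H e a)⁻¹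
        = Xg n l H e ^ (d+1) * Yg n l H e b * (Xg n l H e ^ (d+1))⁻¹ := by
      have e1 : Yg n l H e a * (Xg n l H e ^ (d+1) * Yg n l H e b * (Xg n l H e ^ (d+1))⁻¹)
            * (Yg n l H e a)⁻¹
          = (Yg n l H e a * Xg n l H e ^ (d+1)) * Yg n l H e b
            * (Yg n l H e a * Xg n l H e ^ (d+1))⁻¹ := by
        rw [mul_inv_rev]; simp [mul_assoc]
      rw [e1, h1]
      have e2 : (Xg n l H a * Xg n l H e ^ d) * Yg n l H e b * (Xg n l H a * Xg n l H e ^ d)⁻¹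
          = Xg n l H a * (Xg n l H e ^ d * Yg n l H e b * (Xg n l H e ^ d)⁻¹)
            * (Xg n l H a)⁻¹ := by
        rw [mul_inv_rev]; simp [mul_assoc]
      rw [e2, GCE hl htrans e hd a b]
      conv_rhs => rw [GCE hl htrans e hm a b]
      rw [pow_succ', mul_inv_rev]
      simp [mul_assoc]
    show Yg n l H e a * _ = _ * Yg n l H e a
    conv_rhs => rw [← hconj]
    rw [inv_mul_cancel_right]

lemma ZKC (hl : 2 ≤ l) (htrans : ∀ i j : Fin n, ∃ σ ∈ H, σ i = j)
    (hab : ∀ σ ∈ H, ∀ τ ∈ H, σ * τ = τ * σ) (e : Fin n) (k : ℤ) (a b : Fin n) :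
    Commute (Yg n l H e a) (Xg n l H e ^ k * Yg n l H e b * (Xg n l H e ^ k)⁻¹) := by
  have hl0 : (0 : ℤ) < (l : ℤ) := by exact_mod_cast (by omega : 0 < l)
  set x := Xg n l H e with hxdef
  set m : ℕ := (k % (l : ℤ)).toNat with hmdef
  have hm0 : (0 : ℤ) ≤ k % (l : ℤ) := Int.emod_nonneg k (by omega)
  have hml : k % (l : ℤ) < (l : ℤ) := Int.emod_lt_of_pos k hl0
  have hmlt : m < l := by omega
  have hsplit : x ^ k = (x ^ l) ^ (k / (l : ℤ)) * x ^ m := by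
    have h1 : ((l : ℤ)) * (k / (l : ℤ)) + k % (l : ℤ) = k := Int.mul_ediv_add_emod k l
    calc x ^ k = x ^ ((l : ℤ) * (k / (l : ℤ)) + k % (l : ℤ)) := by rw [h1]
      _ = x ^ ((l : ℤ) * (k / (l : ℤ))) * x ^ (k % (l : ℤ)) := zpow_add x _ _
      _ = (x ^ (l : ℤ)) ^ (k / (l : ℤ)) * x ^ (k % (l : ℤ)) := by rw [zpow_mul]
      _ = (x ^ l) ^ (k / (l : ℤ)) * x ^ m := by
          rw [zpow_natCast, ← zpow_natCast x m, hmdef, Int.toNat_of_nonneg hm0]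
  have hcomm : Commute ((x ^ l) ^ (k / (l : ℤ))) (x ^ m * Yg n l H e b * (x ^ m)⁻¹) := by
    have hz : Commute (x ^ l) (x ^ m * Yg n l H e b * (x ^ m)⁻¹) := by
      have c1 : Commute (x ^ l) (x ^ m) := (Commute.refl x).pow_pow l m
      exact (c1.mul_right (zy hl htrans e b)).mul_right c1.inv_right
    exact hz.zpow_left _
  have hW : x ^ k * Yg n l H e b * (x ^ k)⁻¹ = x ^ m * Yg n l H e b * (x ^ m)⁻¹ := by
    rw [hsplit, mul_inv_rev]
    calc (x ^ l) ^ (k / (l:ℤ)) * x ^ m * Yg n l H e b * ((x ^ m)⁻¹ * ((x ^ l) ^ (k / (l:ℤ)))⁻¹)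
        = (x ^ l) ^ (k / (l:ℤ)) * (x ^ m * Yg n l H e b * (x ^ m)⁻¹)
          * ((x ^ l) ^ (k / (l:ℤ)))⁻¹ := by simp [mul_assoc]
      _ = x ^ m * Yg n l H e b * (x ^ m)⁻¹ := by rw [hcomm.eq, mul_inv_cancel_right]
  rw [hW]
  exact KC hl htrans hab e hmlt a b

lemma MC (hl : 2 ≤ l) (htrans : ∀ i j : Fin n, ∃ σ ∈ H, σ i = j)
    (hab : ∀ σ ∈ H, ∀ τ ∈ H, σ * τ = τ * σ) (e : Fin n) (j k : ℤ) (a b : Fin n) :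
    Commute (Xg n l H e ^ j * Yg n l H e a * (Xg n l H e ^ j)⁻¹)
      (Xg n l H e ^ k * Yg n l H e b * (Xg n l H e ^ k)⁻¹) := by
  set x := Xg n l H e with hxdef
  have h := ZKC hl htrans hab e (k - j) a b
  have h2 := h.map (MulAut.conj (x ^ j)).toMonoidHom
  simp only [MulEquiv.coe_toMonoidHom, MulAut.conj_apply] at h2
  have e1 : x ^ j * (x ^ (k - j) * Yg n l H e b * (x ^ (k - j))⁻¹) * (x ^ j)⁻¹
      = x ^ k * Yg n l H e b * (x ^ k)⁻¹ := by
    have hx : x ^ j * x ^ (k - j) = x ^ k := by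
      rw [← zpow_add]; congr 1; ring
    calc x ^ j * (x ^ (k - j) * Yg n l H e b * (x ^ (k - j))⁻¹) * (x ^ j)⁻¹
        = (x ^ j * x ^ (k - j)) * Yg n l H e b * ((x ^ j * x ^ (k - j)))⁻¹ := by
          rw [mul_inv_rev]; simp [mul_assoc]
      _ = x ^ k * Yg n l H e b * (x ^ k)⁻¹ := by rw [hx]
  rwa [e1] at h2

end SGAux

theorem fraction_group_semidirect_product (n l : ℕ) (hn : 0 < n) (hl : 2 ≤ l) (H : Subgroup (Equiv.Perm (Fin n)))
    (htrans : ∀ i j : Fin n, ∃ σ ∈ H, σ i = j)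
    (hab : ∀ σ ∈ H, ∀ τ ∈ H, σ * τ = τ * σ) :
    ∃ T : Subgroup (SG n l H),
      (∀ g, g ∈ T ↔ IsOfFinOrder g) ∧ T.Normal ∧
      T.IsComplement' (Subgroup.zpowers (Xg n l H ⟨0, hn⟩)) := by
  classical
  open SGAux in
  set e : Fin n := ⟨0, hn⟩ with he
  set x : SG n l H := Xg n l H e with hxdef
  -- the degree homomorphism
  have hcond : ∀ r ∈ permRels n l H,
      FreeGroup.lift (fun _ : Fin n => Multiplicative.ofAdd (1 : ℤ)) r = 1 := by
    rintro r ⟨σ, hσ, w, rfl⟩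
    rw [map_mul, map_inv, map_list_prod, map_list_prod, List.map_ofFn, List.map_ofFn]
    simp [Function.comp_def, List.ofFn_const]
  set φ : SG n l H →* Multiplicative ℤ := PresentedGroup.toGroup hcond with hφdef
  have hφX : ∀ i : Fin n, φ (Xg n l H i) = Multiplicative.ofAdd (1 : ℤ) := fun i =>
    PresentedGroup.toGroup.of hcond
  have hφx : ∀ k : ℤ, φ (x ^ k) = Multiplicative.ofAdd k := by
    intro k
    rw [map_zpow, hφX e]
    rw [show Multiplicative.ofAdd (1:ℤ) ^ k = Multiplicative.ofAdd (k • (1:ℤ)) from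
      (ofAdd_zsmul _ _).symm]
    simp
  have hφY : ∀ b : Fin n, φ (SGAux.Yg n l H e b) = 1 := by
    intro b
    show φ (Xg n l H b * (Xg n l H e)⁻¹) = 1
    rw [map_mul, map_inv, hφX, hφX, mul_inv_cancel]
  -- the subgroup N generated by all conjugates of the y's
  set S : Set (SG n l H) :=
    {g | ∃ (k : ℤ) (b : Fin n), g = x ^ k * SGAux.Yg n l H e b * (x ^ k)⁻¹} with hSdef
  set N : Subgroup (SG n l H) := Subgroup.closure S with hNdef
  have hSN : S ⊆ N := Subgroup.subset_closure
  have hNker : ∀ g ∈ N, φ g = 1 := by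
    intro g hg
    refine (Subgroup.closure_le φ.ker).mpr ?_ hg
    rintro g ⟨k, b, rfl⟩
    simp only [SetLike.mem_coe, MonoidHom.mem_ker, map_mul, map_inv, hφY b, hφx k]
    simp
  have hMC := SGAux.MC hl htrans hab e
  have hNcomm : ∀ g ∈ N, ∀ h ∈ N, Commute g h := by
    intro g hg
    induction hg using Subgroup.closure_induction with
    | mem s hs =>
      intro h hh
      induction hh using Subgroup.closure_induction with
      | mem t ht =>
        obtain ⟨k, b, rfl⟩ := hs
        obtain ⟨m, c, rfl⟩ := ht
        exact hMC k m b c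
      | one => exact Commute.one_right _
      | mul u v hu hv cu cv => exact cu.mul_right cv
      | inv u hu cu => exact cu.inv_right
    | one => exact fun h hh => Commute.one_left _
    | mul u v hu hv cu cv => exact fun h hh => (cu h hh).mul_left (cv h hh)
    | inv u hu cu => exact fun h hh => (cu h hh).inv_left
  have hNtor : ∀ g ∈ N, IsOfFinOrder g := by
    intro g hg
    induction hg using Subgroup.closure_induction with
    | mem s hs =>
      obtain ⟨k, b, rfl⟩ := hs
      have h1 : (MulAut.conj (x ^ k)).toMonoidHom (SGAux.Yg n l H e b)
          = x ^ k * SGAux.Yg n l H e b * (x ^ k)⁻¹ := by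
        rfl
      rw [← h1]
      exact (MulAut.conj (x ^ k)).toMonoidHom.isOfFinOrder (SGAux.Ytor hl htrans e b)
    | one => exact IsOfFinOrder.one
    | mul u v hu hv fu fv => exact Commute.isOfFinOrder_mul (hNcomm u hu v hv) fu fv
    | inv u hu fu => exact fu.inv
  have hCN : ∀ (k : ℤ), ∀ g ∈ N, x ^ k * g * (x ^ k)⁻¹ ∈ N := by
    intro k g hg
    induction hg using Subgroup.closure_induction with
    | mem s hs =>
      obtain ⟨m, b, rfl⟩ := hs
      refine hSN ⟨k + m, b, ?_⟩
      group
    | one => simpa using N.one_mem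
    | mul u v hu hv pu pv =>
      have h : x ^ k * (u * v) * (x ^ k)⁻¹ = (x ^ k * u * (x ^ k)⁻¹) * (x ^ k * v * (x ^ k)⁻¹) := by
        group
      rw [h]; exact mul_mem pu pv
    | inv u hu pu =>
      have h : x ^ k * u⁻¹ * (x ^ k)⁻¹ = (x ^ k * u * (x ^ k)⁻¹)⁻¹ := by group
      rw [h]; exact inv_mem pu
  have hdecomp : ∀ g : SG n l H, ∃ t ∈ N, ∃ k : ℤ, g = t * x ^ k := by
    set D : Subgroup (SG n l H) :=
      { carrier := {g | ∃ t ∈ N, ∃ k : ℤ, g = t * x ^ k}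
        one_mem' := ⟨1, N.one_mem, 0, by simp⟩
        mul_mem' := by
          rintro g1 g2 ⟨t1, ht1, k1, rfl⟩ ⟨t2, ht2, k2, rfl⟩
          exact ⟨t1 * (x ^ k1 * t2 * (x ^ k1)⁻¹), mul_mem ht1 (hCN k1 t2 ht2), k1 + k2, by group⟩
        inv_mem' := by
          rintro g ⟨t, ht, k, rfl⟩
          exact ⟨x ^ (-k) * t⁻¹ * (x ^ (-k))⁻¹, hCN (-k) _ (inv_mem ht), -k, by group⟩ } with hDdef
    intro g
    have hgen : ∀ j : Fin n, (PresentedGroup.of j : SG n l H) ∈ D := by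
      intro j
      refine ⟨SGAux.Yg n l H e j, hSN ⟨0, j, by simp⟩, 1, ?_⟩
      show Xg n l H j = SGAux.Yg n l H e j * x ^ (1 : ℤ)
      rw [zpow_one]
      exact (inv_mul_cancel_right _ _).symm
    exact PresentedGroup.generated_by _ D hgen g
  refine ⟨φ.ker, ?_, MonoidHom.normal_ker φ, ?_⟩
  · intro g
    constructor
    · intro hg
      obtain ⟨t, ht, k, rfl⟩ := hdecomp g
      rw [MonoidHom.mem_ker, map_mul, hNker t ht, one_mul, hφx] at hg
      have hk : k = 0 := by
        have := congrArg Multiplicative.toAdd hg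
        simpa using this
      rw [hk]
      simpa using hNtor t ht
    · intro hg
      rw [MonoidHom.mem_ker]
      obtain ⟨m, hm, hpow⟩ := isOfFinOrder_iff_pow_eq_one.mp (φ.isOfFinOrder hg)
      have h0 : (m : ℤ) * Multiplicative.toAdd (φ g) = 0 := by
        have := congrArg Multiplicative.toAdd hpow
        simpa [toAdd_pow, nsmul_eq_mul] using this
      have h1 : Multiplicative.toAdd (φ g) = 0 := by
        rcases mul_eq_zero.mp h0 with h | h
        · exact absurd h (by exact_mod_cast hm.ne')
        · exact h
      have := congrArg Multiplicative.ofAdd h1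
      simpa using this
  · rw [Subgroup.isComplement'_def, Subgroup.isComplement_iff_existsUnique]
    intro g
    set k : ℤ := Multiplicative.toAdd (φ g) with hkdef
    have htmem : g * (x ^ k)⁻¹ ∈ φ.ker := by
      rw [MonoidHom.mem_ker, map_mul, map_inv, hφx]
      rw [show Multiplicative.ofAdd k = φ g from by rw [hkdef, ofAdd_toAdd]]
      simp
    refine ⟨(⟨g * (x ^ k)⁻¹, htmem⟩, ⟨x ^ k, Subgroup.zpow_mem_zpowers _ _⟩), ?_, ?_⟩
    · exact inv_mul_cancel_right g (x ^ k)
    · rintro ⟨⟨t, ht⟩, ⟨u, hu⟩⟩ heq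
      obtain ⟨m, rfl⟩ := Subgroup.mem_zpowers_iff.mp hu
      simp only at heq
      have hφg : φ g = Multiplicative.ofAdd m := by
        rw [← heq, map_mul, MonoidHom.mem_ker.mp ht, one_mul, hφx]
      have hmk : m = k := by
        rw [hkdef, hφg]
        simp
      subst hmk
      have ht' : t = g * (x ^ k)⁻¹ := by
        rw [← heq]
        exact (mul_inv_cancel_right _ _).symm
      refine Prod.ext ?_ ?_
      · exact Subtype.ext ht'
      · exact Subtype.ext rfl
end

section
/- Let H be a transitive abelian subgroup of Sym_n and let G be the group of fractions of S_{n,l}(H). Then the cyclic subgroup generated by x_1^l is a central subgroup of finite index in G. -/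
namespace SGAux
variable {n l : ℕ} {H : Subgroup (Equiv.Perm (Fin n))}
def P (n l : ℕ) (H : Subgroup (Equiv.Perm (Fin n))) (w : List (Fin n)) : SG n l H :=
  (w.map (Xg n l H)).prod
lemma P_nil : P n l H [] = 1 := rfl
lemma P_append (u v : List (Fin n)) : P n l H (u ++ v) = P n l H u * P n l H v := by simp [P]
lemma P_cons (a : Fin n) (u : List (Fin n)) : P n l H (a :: u) = Xg n l H a * P n l H u := by simp [P]
lemma P_singleton (a : Fin n) : P n l H [a] = Xg n l H a := by simp [P]
lemma P_replicate (m : ℕ) (a : Fin n) : P n l H (List.replicate m a) = Xg n l H a ^ m := by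
  simp [P, List.map_replicate, List.prod_replicate]
lemma rel_fn {σ : Equiv.Perm (Fin n)} (hσ : σ ∈ H) (w : Fin l → Fin n) :
    P n l H (List.ofFn w) = P n l H (List.ofFn fun i => σ (w i)) := by
  have hr : ((List.ofFn fun i => FreeGroup.of (w i)).prod *
      ((List.ofFn fun i => FreeGroup.of (σ (w i))).prod)⁻¹) ∈ permRels n l H :=
    ⟨σ, hσ, w, rfl⟩
  have h1 : PresentedGroup.mk (permRels n l H)
      ((List.ofFn fun i => FreeGroup.of (w i)).prod *
        ((List.ofFn fun i => FreeGroup.of (σ (w i))).prod)⁻¹) = 1 :=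
    (QuotientGroup.eq_one_iff _).2 (Subgroup.subset_normalClosure hr)
  rw [map_mul, map_inv, mul_inv_eq_one] at h1
  have e : ∀ f : Fin l → Fin n,
      PresentedGroup.mk (permRels n l H) (List.ofFn fun i => FreeGroup.of (f i)).prod
        = P n l H (List.ofFn f) := by
    intro f
    rw [map_list_prod]
    simp [P, List.map_ofFn, Function.comp_def]
    rfl
  rw [e, e] at h1
  exact h1
lemma rel_list {σ : Equiv.Perm (Fin n)} (hσ : σ ∈ H) (u : List (Fin n))
    (hu : u.length = l) : P n l H u = P n l H (u.map σ) := by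
  subst hu
  have := rel_fn (l := u.length) hσ u.get
  simpa [List.ofFn_get, ← List.map_ofFn] using this

lemma swap_ends {σ : Equiv.Perm (Fin n)} (hσ : σ ∈ H) (a b : Fin n) (v : List (Fin n))
    (hv : v.length + 1 = l) :
    P n l H (a :: v ++ [b]) = P n l H (σ a :: v ++ [σ⁻¹ b]) := by
  have h1 : P n l H (a :: v) = P n l H (σ a :: v.map σ) :=
    rel_list hσ (a :: v) (by simpa using hv)
  have h2 : P n l H (v.map σ ++ [b]) = P n l H (v ++ [σ⁻¹ b]) := by
    have := rel_list (H.inv_mem hσ) (v.map σ ++ [b]) (by simpa using hv)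
    simpa [List.map_map, List.map_append, Function.comp_def] using this
  calc P n l H (a :: v ++ [b]) = P n l H (a :: v) * P n l H [b] := by
        simp [P, mul_assoc]
    _ = P n l H (σ a :: v.map σ) * P n l H [b] := by rw [h1]
    _ = Xg n l H (σ a) * (P n l H (v.map σ ++ [b])) := by simp [P, mul_assoc]
    _ = Xg n l H (σ a) * (P n l H (v ++ [σ⁻¹ b])) := by rw [h2]
    _ = P n l H (σ a :: v ++ [σ⁻¹ b]) := by simp [P, mul_assoc]

/-- zero out a block of letters, moving the surplus `l` positions later -/
lemma zero_prefix (i0 : Fin n) (htrans : ∀ i j : Fin n, ∃ σ ∈ H, σ i = j) :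
    ∀ (u mid v : List (Fin n)), u.length = v.length → u.length + mid.length = l →
    ∃ v' : List (Fin n), v'.length = v.length ∧
      P n l H (u ++ mid ++ v) = P n l H (List.replicate u.length i0 ++ mid ++ v') := by
  intro u
  induction u with
  | nil =>
    intro mid v hlen _
    exact ⟨v, rfl, by simp⟩
  | cons a u' ih =>
    intro mid v hlen hl
    match v, hlen with
    | b :: v', hlen =>
      obtain ⟨σ, hσ, hσa⟩ := htrans a i0
      have hl' : u'.length + mid.length + 1 = l := by simp at hl; omega
      have hlen2 : (u' ++ mid).length + 1 = l := by simp; omega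
      have hswap : P n l H (a :: (u' ++ mid) ++ [b]) =
          P n l H (i0 :: (u' ++ mid) ++ [σ⁻¹ b]) := by
        have := swap_ends hσ a b (u' ++ mid) hlen2
        rwa [hσa] at this
      obtain ⟨v'', hv''len, hv''⟩ := ih (mid ++ [σ⁻¹ b]) v' (by simpa using hlen)
        (by simp; omega)
      refine ⟨σ⁻¹ b :: v'', by simpa using hv''len, ?_⟩
      have e1 : P n l H ((a :: u') ++ mid ++ (b :: v')) =
          P n l H (a :: (u' ++ mid) ++ [b]) * P n l H v' := by
        simp [P, mul_assoc]
      rw [e1, hswap]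
      have e2 : P n l H (i0 :: (u' ++ mid) ++ [σ⁻¹ b]) * P n l H v' =
          Xg n l H i0 * P n l H (u' ++ (mid ++ [σ⁻¹ b]) ++ v') := by
        simp [P, mul_assoc]
      rw [e2, hv'']
      simp [P, List.replicate_succ, mul_assoc]

section Main
variable (i0 : Fin n)

/-- all `l`-th powers of generators coincide -/
lemma x_pow_eq (htrans : ∀ i j : Fin n, ∃ σ ∈ H, σ i = j) (i : Fin n) : Xg n l H i ^ l = Xg n l H i0 ^ l := by
  obtain ⟨σ, hσ, hσi⟩ := htrans i i0
  have := rel_list hσ (List.replicate l i) List.length_replicate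
  simpa [P_replicate, List.map_replicate, hσi] using this

/-- the `l`-th power of `x_{i0}` commutes with each generator -/
lemma comm_gen (htrans : ∀ i j : Fin n, ∃ σ ∈ H, σ i = j) (hl : 0 < l) (j : Fin n) :
    Xg n l H i0 ^ l * Xg n l H j = Xg n l H j * Xg n l H i0 ^ l := by
  obtain ⟨m, rfl⟩ : ∃ m, l = m + 1 := ⟨l - 1, by omega⟩
  obtain ⟨σ, hσ, hσj⟩ := htrans j i0
  have hA : P n (m+1) H (List.replicate m i0 ++ [j]) =
      P n (m+1) H (List.replicate m (σ i0) ++ [i0]) := by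
    have := rel_list (l := m + 1) hσ (List.replicate m i0 ++ [j]) (by simp)
    simpa [List.map_append, List.map_replicate, hσj] using this
  have hB : P n (m+1) H (j :: List.replicate m i0) =
      P n (m+1) H (i0 :: List.replicate m (σ i0)) := by
    have := rel_list (l := m + 1) hσ (j :: List.replicate m i0) (by simp)
    simpa [List.map_replicate, hσj] using this
  have hP1 : P n (m+1) H (List.replicate m i0 ++ [j])
      = Xg n (m+1) H i0 ^ m * Xg n (m+1) H j := by simp [P]
  have hP2 : P n (m+1) H (List.replicate m (σ i0) ++ [i0])
      = Xg n (m+1) H (σ i0) ^ m * Xg n (m+1) H i0 := by simp [P]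
  have hP3 : P n (m+1) H (j :: List.replicate m i0)
      = Xg n (m+1) H j * Xg n (m+1) H i0 ^ m := by simp [P]
  have hP4 : P n (m+1) H (i0 :: List.replicate m (σ i0))
      = Xg n (m+1) H i0 * Xg n (m+1) H (σ i0) ^ m := by simp [P]
  rw [hP1, hP2] at hA
  rw [hP3, hP4] at hB
  calc Xg n (m+1) H i0 ^ (m+1) * Xg n (m+1) H j
      = Xg n (m+1) H i0 * (Xg n (m+1) H i0 ^ m * Xg n (m+1) H j) := by
        rw [pow_succ', mul_assoc]
    _ = Xg n (m+1) H i0 * (Xg n (m+1) H (σ i0) ^ m * Xg n (m+1) H i0) := by rw [hA]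
    _ = (Xg n (m+1) H i0 * Xg n (m+1) H (σ i0) ^ m) * Xg n (m+1) H i0 := by
        rw [mul_assoc]
    _ = (Xg n (m+1) H j * Xg n (m+1) H i0 ^ m) * Xg n (m+1) H i0 := by rw [hB]
    _ = Xg n (m+1) H j * Xg n (m+1) H i0 ^ (m+1) := by rw [mul_assoc, ← pow_succ]

/-- the `l`-th power of `x_{i0}` is central -/
lemma z_central (htrans : ∀ i j : Fin n, ∃ σ ∈ H, σ i = j) (hl : 0 < l) (g : SG n l H) :
    g * Xg n l H i0 ^ l = Xg n l H i0 ^ l * g := by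
  have hg : g ∈ Subgroup.centralizer {Xg n l H i0 ^ l} := by
    apply PresentedGroup.generated_by
    intro j
    rw [Subgroup.mem_centralizer_iff]
    intro h hh
    rw [Set.mem_singleton_iff] at hh
    subst hh
    exact comm_gen i0 htrans hl j
  exact (Subgroup.mem_centralizer_iff.1 hg _ rfl).symm

/-- every word of length `≥ 2l` reduces -/
lemma reduce (htrans : ∀ i j : Fin n, ∃ σ ∈ H, σ i = j) (hl : 0 < l) :
    ∀ w : List (Fin n), ∃ (k : ℕ) (w' : List (Fin n)), w'.length < 2 * l ∧
      P n l H w = (Xg n l H i0 ^ l) ^ k * P n l H w' := by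
  have key : ∀ N, ∀ w : List (Fin n), w.length ≤ N →
      ∃ (k : ℕ) (w' : List (Fin n)), w'.length < 2 * l ∧
      P n l H w = (Xg n l H i0 ^ l) ^ k * P n l H w' := by
    intro N
    induction N with
    | zero =>
      intro w hw
      exact ⟨0, w, by omega, by simp⟩
    | succ N ih =>
      intro w hw
      by_cases hlen : w.length < 2 * l
      · exact ⟨0, w, hlen, by simp⟩
      · push_neg at hlen
        set u := w.take l with hu
        set v := (w.drop l).take l with hv
        set rest := (w.drop l).drop l with hrest
        have hul : u.length = l := by simp [hu]; omega
        have hvl : v.length = l := by simp [hv]; omega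
        have hrl : rest.length = w.length - 2 * l := by simp [hrest]; omega
        have hsplit : w = u ++ v ++ rest := by
          simp [hu, hv, hrest]
        have hmid : u.length + ([] : List (Fin n)).length = l := by simp [hul]
        obtain ⟨v', hv'len, hv'⟩ := zero_prefix i0 htrans u [] v (hul.trans hvl.symm) hmid
        obtain ⟨k, w', hw'len, hw'⟩ := ih (v' ++ rest) (by simp; omega)
        refine ⟨k + 1, w', hw'len, ?_⟩
        have hsp : P n l H w = P n l H (u ++ [] ++ v) * P n l H rest := by
          rw [hsplit]; simp [P_append, mul_assoc]
        rw [hsp, hv']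
        have hrep : P n l H (List.replicate u.length i0 ++ [] ++ v')
            = Xg n l H i0 ^ l * P n l H v' := by
          simp [P_append, P_replicate, hul]
        rw [hrep, mul_assoc, ← P_append, hw']
        rw [pow_succ]
        group
  intro w
  exact key w.length w le_rfl

/-- inverse of a generator -/
lemma x_inv (htrans : ∀ i j : Fin n, ∃ σ ∈ H, σ i = j) (hl : 0 < l) (a : Fin n) :
    (Xg n l H a)⁻¹ = (Xg n l H i0 ^ l)⁻¹ * Xg n l H a ^ (l - 1) := by
  have h := x_pow_eq (l := l) i0 htrans a
  obtain ⟨m, rfl⟩ : ∃ m, l = m + 1 := ⟨l - 1, by omega⟩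
  rw [← h]
  simp only [Nat.add_sub_cancel]
  group

/-- inverses of words -/
lemma inv_P (htrans : ∀ i j : Fin n, ∃ σ ∈ H, σ i = j) (hl : 0 < l) :
    ∀ w : List (Fin n), ∃ (k : ℤ) (w' : List (Fin n)), w'.length < 2 * l ∧
      (P n l H w)⁻¹ = (Xg n l H i0 ^ l) ^ k * P n l H w' := by
  intro w
  induction w with
  | nil => exact ⟨0, [], by simp; omega, by simp [P_nil]⟩
  | cons a w ih =>
    obtain ⟨k, w', hlt, hw⟩ := ih
    obtain ⟨k2, w'', hlt2, hw2⟩ := reduce i0 htrans hl (w' ++ List.replicate (l-1) a)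
    refine ⟨k - 1 + k2, w'', hlt2, ?_⟩
    have hcomm : ∀ g : SG n l H, Commute g (Xg n l H i0 ^ l) :=
      fun g => z_central i0 htrans hl g
    have h1 : (P n l H (a :: w))⁻¹ = (P n l H w)⁻¹ * (Xg n l H a)⁻¹ := by
      rw [P_cons, mul_inv_rev]
    rw [h1, hw, x_inv i0 htrans hl a]
    have h2 : P n l H w' * ((Xg n l H i0 ^ l)⁻¹ * Xg n l H a ^ (l - 1))
        = (Xg n l H i0 ^ l)⁻¹ * P n l H (w' ++ List.replicate (l-1) a) := by
      rw [← mul_assoc, (hcomm (P n l H w')).inv_right.eq, mul_assoc,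
        P_append, P_replicate]
    rw [mul_assoc, h2, hw2]
    have h3 : ∀ (j1 j2 : ℤ) (g : SG n l H),
        (Xg n l H i0 ^ l) ^ j1 * ((Xg n l H i0 ^ l)⁻¹ * ((Xg n l H i0 ^ l) ^ j2 * g))
          = (Xg n l H i0 ^ l) ^ (j1 - 1 + j2) * g := by
      intro j1 j2 g
      rw [← mul_assoc, ← mul_assoc, ← zpow_sub_one, ← zpow_add]
    have := h3 k (k2 : ℤ) (P n l H w'')
    rw [zpow_natCast] at this
    rw [this]

/-- every element of the group is `z ^ k` times a short positive word -/
lemma full_gen (htrans : ∀ i j : Fin n, ∃ σ ∈ H, σ i = j) (hl : 0 < l) (g : SG n l H) :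
    ∃ (k : ℤ) (w : List (Fin n)), w.length < 2 * l ∧
      g = (Xg n l H i0 ^ l) ^ k * P n l H w := by
  have hcomm : ∀ g : SG n l H, Commute g (Xg n l H i0 ^ l) :=
    fun g => z_central i0 htrans hl g
  let S : Subgroup (SG n l H) :=
    { carrier := {g | ∃ (k : ℤ) (w : List (Fin n)), w.length < 2 * l ∧
        g = (Xg n l H i0 ^ l) ^ k * P n l H w}
      one_mem' := ⟨0, [], by simp; omega, by simp [P_nil]⟩
      mul_mem' := by
        rintro a b ⟨k1, w1, h1, rfl⟩ ⟨k2, w2, h2, rfl⟩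
        obtain ⟨k3, w3, h3, hw3⟩ := reduce i0 htrans hl (w1 ++ w2)
        refine ⟨k1 + k2 + k3, w3, h3, ?_⟩
        have hc : P n l H w1 * (Xg n l H i0 ^ l) ^ k2
            = (Xg n l H i0 ^ l) ^ k2 * P n l H w1 :=
          ((hcomm (P n l H w1)).zpow_right k2).eq
        calc (Xg n l H i0 ^ l) ^ k1 * P n l H w1 * ((Xg n l H i0 ^ l) ^ k2 * P n l H w2)
            = (Xg n l H i0 ^ l) ^ k1 * ((Xg n l H i0 ^ l) ^ k2 * P n l H w1) * P n l H w2 := by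
              rw [mul_assoc, ← mul_assoc (P n l H w1), hc]
              group
          _ = (Xg n l H i0 ^ l) ^ (k1 + k2) * P n l H (w1 ++ w2) := by
              rw [P_append, ← mul_assoc, ← zpow_add]
              group
          _ = (Xg n l H i0 ^ l) ^ (k1 + k2) * ((Xg n l H i0 ^ l) ^ (k3 : ℤ) * P n l H w3) := by
              rw [hw3, zpow_natCast]
          _ = (Xg n l H i0 ^ l) ^ (k1 + k2 + k3) * P n l H w3 := by
              rw [← mul_assoc, ← zpow_add]
      inv_mem' := by
        rintro a ⟨k, w, h, rfl⟩
        obtain ⟨k2, w2, h2, hw2⟩ := inv_P i0 htrans hl w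
        refine ⟨k2 - k, w2, h2, ?_⟩
        rw [mul_inv_rev, hw2]
        have hc : (Xg n l H i0 ^ l) ^ k2 * P n l H w2 * ((Xg n l H i0 ^ l) ^ k)⁻¹
            = (Xg n l H i0 ^ l) ^ k2 * ((Xg n l H i0 ^ l) ^ k)⁻¹ * P n l H w2 := by
          rw [mul_assoc, mul_assoc, (((hcomm (P n l H w2)).zpow_right k).inv_right).eq]
        rw [hc, ← zpow_neg, ← zpow_add, ← sub_eq_add_neg] }
  have hg : g ∈ S := by
    apply PresentedGroup.generated_by
    intro j
    exact ⟨0, [j], by simp; omega, by simp [P_singleton]; rfl⟩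
  exact hg

end Main
end SGAux

theorem zpowers_x1_pow_l_central_finite_index (n l : ℕ) (hn : 0 < n) (hl : 2 ≤ l) (H : Subgroup (Equiv.Perm (Fin n)))
    (htrans : ∀ i j : Fin n, ∃ σ ∈ H, σ i = j)
    (hab : ∀ σ ∈ H, ∀ τ ∈ H, σ * τ = τ * σ) :
    Subgroup.zpowers (Xg n l H ⟨0, hn⟩ ^ l) ≤ Subgroup.center (SG n l H) ∧
      (Subgroup.zpowers (Xg n l H ⟨0, hn⟩ ^ l)).FiniteIndex := by
  have hl0 : 0 < l := by omega
  set i0 : Fin n := ⟨0, hn⟩ with hi0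
  constructor
  · rw [Subgroup.zpowers_le, Subgroup.mem_center_iff]
    intro g
    exact SGAux.z_central i0 htrans hl0 g
  · have hfin : Finite (SG n l H ⧸ Subgroup.zpowers (Xg n l H i0 ^ l)) := by
      have hset : {w : List (Fin n) | w.length < 2 * l}.Finite :=
        List.finite_length_lt (Fin n) (2 * l)
      haveI := hset.to_subtype
      apply Finite.of_surjective
        (f := fun w : {w : List (Fin n) | w.length < 2 * l} =>
          (QuotientGroup.mk (SGAux.P n l H w.1) :
            SG n l H ⧸ Subgroup.zpowers (Xg n l H i0 ^ l)))
      intro q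
      obtain ⟨g, rfl⟩ := QuotientGroup.mk_surjective q
      obtain ⟨k, w, hlt, rfl⟩ := SGAux.full_gen i0 htrans hl0 g
      refine ⟨⟨w, hlt⟩, ?_⟩
      apply (QuotientGroup.eq).mpr
      have hc2 : Commute (SGAux.P n l H w) (Xg n l H i0 ^ l) :=
        SGAux.z_central i0 htrans hl0 (SGAux.P n l H w)
      have hkey : (SGAux.P n l H w)⁻¹ * ((Xg n l H i0 ^ l) ^ k * SGAux.P n l H w)
          = (Xg n l H i0 ^ l) ^ k := by
        rw [← (hc2.zpow_right k).eq, ← mul_assoc, inv_mul_cancel, one_mul]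
      rw [hkey]
      exact Subgroup.zpow_mem_zpowers _ k
    exact Subgroup.finiteIndex_of_finite_quotient
end

section
/- Let H be a non-transitive, semi-regular, abelian subgroup of Sym_n with orbit representatives i_1, ..., i_r (r > 1), and let K be a field. Then K[S_{n,l}(H)] is a finitely generated free right module over the free K-algebra R = K⟨x_{i_1}, ..., x_{i_r}⟩, with free basis given by 1 together with the elements x_{j_1}⋯x_{j_k} x_{σ(i_j)} for 0 ≤ k ≤ l−2, (j_1,...,j_k) ∈ {1,...,n}^k, j ∈ {1,...,r}, σ ∈ H \ {id}. -/
/-- Index type for the free right module basis of `K[S_{n,l}(H)]` over the free algebra on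
the orbit representatives: `1` together with the elements
`x_{j_1}⋯x_{j_k} x_{σ(i_j)}` for `0 ≤ k ≤ l-2`, `σ ∈ H \\ {1}`. -/
def BasisIdx (n l r : ℕ) (H : Subgroup (Equiv.Perm (Fin n))) : Type :=
  Unit ⊕ (Σ k : Fin (l - 1), (Fin (k : ℕ) → Fin n) × (Fin r × {σ : H // σ ≠ 1}))

/-- The basis elements of `K[S_{n,l}(H)]` as a right module over the free algebra on the
orbit representatives. -/
noncomputable def basisElem (K : Type) [Field K] (n l r : ℕ) (H : Subgroup (Equiv.Perm (Fin n)))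
    (reps : Fin r → Fin n) : BasisIdx n l r H → MonoidAlgebra K (SM n l H)
  | Sum.inl _ => 1
  | Sum.inr ⟨_, j, t, σ⟩ =>
      MonoidAlgebra.of K (SM n l H)
        ((List.map (xg n l H) (List.ofFn j)).prod *
          xg n l H ((σ.1 : Equiv.Perm (Fin n)) (reps t)))


namespace SnlHAux

variable {n r : ℕ} {H : Subgroup (Equiv.Perm (Fin n))} {reps : Fin r → Fin n}

/-- The orbit of a point, given unique orbit representatives. -/
noncomputable def orbF (horb : ∀ j : Fin n, ∃! t : Fin r, ∃ σ ∈ H, σ (reps t) = j)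
    (j : Fin n) : Fin r := (horb j).choose

/-- The unique element of `H` carrying the representative of the orbit of `j` to `j`. -/
noncomputable def compF (horb : ∀ j : Fin n, ∃! t : Fin r, ∃ σ ∈ H, σ (reps t) = j)
    (j : Fin n) : Equiv.Perm (Fin n) := (horb j).choose_spec.1.choose

variable (horb : ∀ j : Fin n, ∃! t : Fin r, ∃ σ ∈ H, σ (reps t) = j)
variable (hsr : ∀ i : Fin n, ∀ σ ∈ H, σ i = i → σ = 1)

theorem compF_mem (j : Fin n) : compF horb j ∈ H := (horb j).choose_spec.1.choose_spec.1

theorem compF_spec (j : Fin n) : compF horb j (reps (orbF horb j)) = j :=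
  (horb j).choose_spec.1.choose_spec.2

theorem orbF_unique {j : Fin n} {t : Fin r} {σ : Equiv.Perm (Fin n)} (hσ : σ ∈ H)
    (h : σ (reps t) = j) : orbF horb j = t :=
  ((horb j).choose_spec.2 t ⟨σ, hσ, h⟩).symm

include hsr in
theorem H_ext {α β : Equiv.Perm (Fin n)} (hα : α ∈ H) (hβ : β ∈ H) {x : Fin n}
    (h : α x = β x) : α = β := by
  have h1 : β⁻¹ * α ∈ H := H.mul_mem (H.inv_mem hβ) hα
  have h2 : (β⁻¹ * α) x = x := by
    simp [Equiv.Perm.mul_apply, h]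
  have h3 := hsr x _ h1 h2
  have h4 : α = β * 1 := by rw [← h3]; group
  simpa using h4

include hsr in
theorem compF_unique {j : Fin n} {t : Fin r} {σ : Equiv.Perm (Fin n)} (hσ : σ ∈ H)
    (h : σ (reps t) = j) : compF horb j = σ := by
  have ht := orbF_unique horb hσ h
  exact H_ext hsr (compF_mem horb j) hσ (by rw [compF_spec horb j, ht, h])

theorem orbF_reps (t : Fin r) : orbF horb (reps t) = t :=
  orbF_unique horb H.one_mem rfl

include hsr in
theorem compF_reps (t : Fin r) : compF horb (reps t) = 1 :=
  compF_unique horb hsr H.one_mem rfl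

theorem orbF_apply {σ : Equiv.Perm (Fin n)} (hσ : σ ∈ H) (j : Fin n) :
    orbF horb (σ j) = orbF horb j := by
  refine orbF_unique horb (H.mul_mem hσ (compF_mem horb j)) ?_
  rw [Equiv.Perm.mul_apply, compF_spec]

include hsr in
theorem compF_apply {σ : Equiv.Perm (Fin n)} (hσ : σ ∈ H) (j : Fin n) :
    compF horb (σ j) = σ * compF horb j := by
  refine compF_unique horb hsr (t := orbF horb j) (H.mul_mem hσ (compF_mem horb j)) ?_
  rw [Equiv.Perm.mul_apply, compF_spec]

include horb in
theorem reps_injective : Function.Injective reps := by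
  intro t t' h
  have h1 := orbF_reps horb t
  rw [h, orbF_reps horb] at h1
  exact h1.symm

/-- A letter whose `H`-component is trivial is a representative. -/
theorem eq_reps_of_compF_eq_one {j : Fin n} (h : compF horb j = 1) :
    reps (orbF horb j) = j := by
  have h1 := compF_spec horb j
  rw [h] at h1
  simpa using h1

section Pfun

variable (l : ℕ)

/-- Product of the `H`-components of the letters in positions congruent to `c` mod `l`. -/
noncomputable def Pfun (horb : ∀ j : Fin n, ∃! t : Fin r, ∃ σ ∈ H, σ (reps t) = j) :
    List (Fin n) → ZMod l → Equiv.Perm (Fin n)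
  | [], _ => 1
  | j :: t, c => (if c = 0 then compF horb j else 1) * Pfun horb t (c - 1)

@[simp] theorem Pfun_nil (c : ZMod l) : Pfun l horb [] c = 1 := rfl

theorem Pfun_cons (j : Fin n) (t : List (Fin n)) (c : ZMod l) :
    Pfun l horb (j :: t) c = (if c = 0 then compF horb j else 1) * Pfun l horb t (c - 1) := rfl

theorem Pfun_mem (x : List (Fin n)) (c : ZMod l) : Pfun l horb x c ∈ H := by
  induction x generalizing c with
  | nil => exact H.one_mem
  | cons j t ih =>
      rw [Pfun_cons]
      refine H.mul_mem ?_ (ih _)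
      split
      · exact compF_mem horb j
      · exact H.one_mem

theorem Pfun_append (a b : List (Fin n)) (c : ZMod l) :
    Pfun l horb (a ++ b) c = Pfun l horb a c * Pfun l horb b (c - (a.length : ℕ)) := by
  induction a generalizing c with
  | nil => simp
  | cons j t ih =>
      simp only [List.cons_append, Pfun_cons, ih, List.length_cons]
      rw [mul_assoc]
      congr 2
      push_cast
      ring_nf

end Pfun
section ModL

variable (l : ℕ) (horb : ∀ j : Fin n, ∃! t : Fin r, ∃ σ ∈ H, σ (reps t) = j)

theorem natCast_inj_lt (hl : 2 ≤ l) {a b : ℕ} (ha : a < l) (hb : b < l)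
    (h : ((a : ℕ) : ZMod l) = ((b : ℕ) : ZMod l)) : a = b := by
  haveI : NeZero l := ⟨by omega⟩
  have := congrArg ZMod.val h
  rwa [ZMod.val_cast_of_lt ha, ZMod.val_cast_of_lt hb] at this

theorem neg_one_eq_cast (hl : 2 ≤ l) : (-1 : ZMod l) = ((l - 1 : ℕ) : ZMod l) := by
  have h1 : ((l - 1 : ℕ) : ZMod l) + 1 = 0 := by
    have h2 : ((l - 1 : ℕ) : ZMod l) + ((1 : ℕ) : ZMod l) = ((l - 1 + 1 : ℕ) : ZMod l) := by
      push_cast; ring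
    have h3 : l - 1 + 1 = l := by omega
    rw [Nat.cast_one] at h2
    rw [h2, h3, ZMod.natCast_self]
  linear_combination -h1

open Classical in
theorem Pfun_map (hl : 2 ≤ l) (hsr : ∀ i : Fin n, ∀ σ ∈ H, σ i = i → σ = 1)
    {σ : Equiv.Perm (Fin n)} (hσ : σ ∈ H) :
    ∀ (x : List (Fin n)), x.length ≤ l → ∀ c : ZMod l,
    Pfun l horb (x.map σ) c =
      (if ∃ s, s < x.length ∧ ((s : ℕ) : ZMod l) = c then σ else 1) * Pfun l horb x c := by
  intro x
  induction x with
  | nil => intro _ c; simp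
  | cons j t ih =>
    intro hlen c
    have hlen' : t.length ≤ l := by simp at hlen; omega
    have hlen'' : t.length ≤ l - 1 := by simp at hlen; omega
    rw [List.map_cons, Pfun_cons, Pfun_cons]
    by_cases hc : c = 0
    · subst hc
      rw [if_pos rfl, if_pos rfl, compF_apply horb hsr hσ j, ih hlen' (0 - 1)]
      have hno : ¬ ∃ s, s < t.length ∧ ((s : ℕ) : ZMod l) = 0 - 1 := by
        rintro ⟨s, hs, hcast⟩
        rw [zero_sub, neg_one_eq_cast l hl] at hcast
        have := natCast_inj_lt l hl (by omega) (by omega) hcast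
        omega
      rw [if_neg hno]
      have hyes : ∃ s, s < (j :: t).length ∧ ((s : ℕ) : ZMod l) = 0 :=
        ⟨0, by simp, by simp⟩
      rw [if_pos hyes]
      simp [mul_assoc]
    · rw [if_neg hc, if_neg hc, ih hlen' (c - 1), one_mul]
      have hiff : (∃ s, s < (j :: t).length ∧ ((s : ℕ) : ZMod l) = c) ↔
          (∃ s, s < t.length ∧ ((s : ℕ) : ZMod l) = c - 1) := by
        constructor
        · rintro ⟨s, hs, hcast⟩
          match s with
          | 0 => exact absurd (by simpa using hcast.symm) hc
          | s + 1 =>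
            refine ⟨s, by simpa using hs, ?_⟩
            have : ((s : ℕ) : ZMod l) + 1 = c := by push_cast at hcast ⊢; linear_combination hcast
            linear_combination this
        · rintro ⟨s, hs, hcast⟩
          refine ⟨s + 1, by simp; omega, ?_⟩
          push_cast
          linear_combination hcast
      by_cases hex : ∃ s, s < t.length ∧ ((s : ℕ) : ZMod l) = c - 1
      · rw [if_pos hex, if_pos (hiff.mpr hex), one_mul]
      · rw [if_neg hex, if_neg (fun h => hex (hiff.mp h)), one_mul, one_mul]

theorem Pfun_eq_one : ∀ (x : List (Fin n)) (c : ZMod l),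
    (∀ (s : ℕ) (h : s < x.length), ((s : ℕ) : ZMod l) = c → compF horb x[s] = 1) →
    Pfun l horb x c = 1 := by
  intro x
  induction x with
  | nil => intro c _; rfl
  | cons j t ih =>
    intro c hcomp
    rw [Pfun_cons]
    have htail : Pfun l horb t (c - 1) = 1 := by
      refine ih (c - 1) fun s hs hcast => ?_
      have := hcomp (s + 1) (by simpa using hs) (by push_cast; linear_combination hcast)
      simpa using this
    rw [htail, mul_one]
    split
    · rename_i hc
      exact hcomp 0 (by simp) (by simpa using hc.symm)
    · rfl

theorem Pfun_eq_single : ∀ (x : List (Fin n)) (c : ZMod l) (s₀ : ℕ) (h₀ : s₀ < x.length),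
    ((s₀ : ℕ) : ZMod l) = c →
    (∀ (s : ℕ) (h : s < x.length), s ≠ s₀ → ((s : ℕ) : ZMod l) = c → compF horb x[s] = 1) →
    Pfun l horb x c = compF horb x[s₀] := by
  intro x
  induction x with
  | nil => intro c s₀ h₀; simp at h₀
  | cons j t ih =>
    intro c s₀ h₀ hcast hcomp
    match s₀ with
    | 0 =>
      have hc : c = 0 := by simpa using hcast.symm
      subst hc
      rw [Pfun_cons, if_pos rfl]
      have htail : Pfun l horb t (0 - 1) = 1 := by
        refine Pfun_eq_one l horb t (0 - 1) fun s hs hcast' => ?_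
        have := hcomp (s + 1) (by simpa using hs) (by omega)
          (by push_cast at hcast' ⊢; linear_combination hcast')
        simpa using this
      rw [htail, mul_one]
      rfl
    | s' + 1 =>
      have h₀' : s' < t.length := by simpa using h₀
      have htail : Pfun l horb t (c - 1) = compF horb t[s'] := by
        refine ih (c - 1) s' h₀' (by push_cast at hcast ⊢; linear_combination hcast)
          fun s hs hne hcast' => ?_
        have := hcomp (s + 1) (by simpa using hs) (by omega)
          (by push_cast at hcast' ⊢; linear_combination hcast')
        simpa using this
      rw [Pfun_cons, htail]
      have hget : (j :: t)[s' + 1] = t[s'] := by simp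
      rw [hget]
      split
      · rename_i hc
        have := hcomp 0 (by simp) (by omega) (by simpa using hc.symm)
        simp only [List.getElem_cons_zero] at this
        rw [this, one_mul]
      · rw [one_mul]

/-- Normal form: the `H`-component of every letter in position `≥ l - 1` is trivial. -/
def IsNormal (x : List (Fin n)) : Prop :=
  ∀ (s : ℕ) (h : s < x.length), l - 1 ≤ s → compF horb x[s] = 1

theorem Pfun_last_of_normal (hl : 2 ≤ l) {x : List (Fin n)} (hx : IsNormal l horb x) :
    Pfun l horb x ((l - 1 : ℕ) : ZMod l) = 1 := by
  refine Pfun_eq_one l horb x _ fun s hs hcast => ?_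
  refine hx s hs ?_
  by_contra hlt
  have hsl : s < l := by omega
  have := natCast_inj_lt l hl hsl (by omega) hcast
  omega

theorem normal_unique (hl : 2 ≤ l) (hsr : ∀ i : Fin n, ∀ σ ∈ H, σ i = i → σ = 1)
    {a b : List (Fin n)} (ha : IsNormal l horb a) (hb : IsNormal l horb b)
    (hmap : a.map (orbF horb) = b.map (orbF horb))
    (hP : ∃ τ ∈ H, ∀ c, Pfun l horb a c = τ * Pfun l horb b c) : a = b := by
  obtain ⟨τ, hτ, hPc⟩ := hP
  have hlen : a.length = b.length := by
    have := congrArg List.length hmap; simpa using this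
  have hτ1 : τ = 1 := by
    have := hPc ((l - 1 : ℕ) : ZMod l)
    rw [Pfun_last_of_normal l horb hl ha, Pfun_last_of_normal l horb hl hb] at this
    simpa using this.symm
  subst hτ1
  simp only [one_mul] at hPc
  refine List.ext_getElem hlen fun s hsa hsb => ?_
  have horbeq : orbF horb a[s] = orbF horb b[s] := by
    have h1 : (a.map (orbF horb))[s]'(by simpa using hsa) =
        (b.map (orbF horb))[s]'(by simpa using hsb) := by
      congr 1
    simpa using h1
  have hcompeq : compF horb a[s] = compF horb b[s] := by
    by_cases hs : l - 1 ≤ s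
    · rw [ha s hsa hs, hb s hsb hs]
    · have hsl : s < l - 1 := by omega
      have hone : ∀ (x : List (Fin n)), IsNormal l horb x → ∀ (h : s < x.length),
          Pfun l horb x ((s : ℕ) : ZMod l) = compF horb x[s] := by
        intro x hx h
        refine Pfun_eq_single l horb x _ s h rfl fun s' hs' hne hcast => ?_
        refine hx s' hs' ?_
        by_contra hlt
        have := natCast_inj_lt l hl (by omega) (by omega) hcast
        omega
      rw [← hone a ha hsa, ← hone b hb hsb]
      exact hPc _
  calc a[s] = compF horb a[s] (reps (orbF horb a[s])) := (compF_spec horb _).symm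
    _ = compF horb b[s] (reps (orbF horb b[s])) := by rw [horbeq, hcompeq]
    _ = b[s] := compF_spec horb _

end ModL


section Econ

variable (l : ℕ) (horb : ∀ j : Fin n, ∃! t : Fin r, ∃ σ ∈ H, σ (reps t) = j)

/-- The complete-invariant congruence. -/
def Econ (hab : ∀ σ ∈ H, ∀ τ ∈ H, σ * τ = τ * σ) : Con (FreeMonoid (Fin n)) where
  r a b := a.toList.map (orbF horb) = b.toList.map (orbF horb) ∧
    ∃ τ ∈ H, ∀ c, Pfun l horb a.toList c = τ * Pfun l horb b.toList c
  iseqv := by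
    constructor
    · intro a
      exact ⟨rfl, 1, H.one_mem, fun c => (one_mul _).symm⟩
    · rintro a b ⟨hmap, τ, hτ, hP⟩
      refine ⟨hmap.symm, τ⁻¹, H.inv_mem hτ, fun c => ?_⟩
      rw [hP c]
      group
    · rintro a b c ⟨hmap1, τ1, hτ1, hP1⟩ ⟨hmap2, τ2, hτ2, hP2⟩
      refine ⟨hmap1.trans hmap2, τ1 * τ2, H.mul_mem hτ1 hτ2, fun c => ?_⟩
      rw [hP1 c, hP2 c, mul_assoc]
  mul' := by
    rintro a b a' b' ⟨hmap, τ, hτ, hP⟩ ⟨hmap', τ', hτ', hP'⟩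
    have hlen : a.toList.length = b.toList.length := by
      have := congrArg List.length hmap; simpa using this
    refine ⟨?_, τ * τ', H.mul_mem hτ hτ', fun c => ?_⟩
    · rw [FreeMonoid.toList_mul, FreeMonoid.toList_mul, List.map_append, List.map_append,
        hmap, hmap']
    · rw [FreeMonoid.toList_mul, FreeMonoid.toList_mul, Pfun_append, Pfun_append,
        hP c, hlen, hP' (c - (b.toList.length : ℕ))]
      have hcomm : Pfun l horb b.toList c * τ' = τ' * Pfun l horb b.toList c :=
        hab _ (Pfun_mem (l := l) (horb := horb) _ _) _ hτ'
      set u := Pfun l horb b.toList c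
      set v := Pfun l horb b'.toList (c - (b.toList.length : ℕ))
      calc τ * u * (τ' * v) = τ * (u * τ') * v := by group
        _ = τ * (τ' * u) * v := by rw [hcomm]
        _ = τ * τ' * (u * v) := by group

theorem permCon_le_Econ (hl : 2 ≤ l) (hsr : ∀ i : Fin n, ∀ σ ∈ H, σ i = i → σ = 1)
    (hab : ∀ σ ∈ H, ∀ τ ∈ H, σ * τ = τ * σ) :
    permCon n l H ≤ Econ l horb hab := by
  refine Con.conGen_le.mpr fun a b hab' => ?_
  obtain ⟨σ, hσ, w, ha, hb⟩ := hab'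
  subst ha hb
  have hofn : (List.ofFn fun i => σ (w i)) = (List.ofFn fun i => w i).map σ := by
    rw [List.map_ofFn]; rfl
  constructor
  · rw [FreeMonoid.toList_ofList, FreeMonoid.toList_ofList, hofn, List.map_map]
    exact List.map_congr_left fun x _ => (orbF_apply horb hσ x).symm
  · refine ⟨σ⁻¹, H.inv_mem hσ, fun c => ?_⟩
    rw [FreeMonoid.toList_ofList, FreeMonoid.toList_ofList, hofn,
      Pfun_map l horb hl hsr hσ _ (by simp) c]
    have hyes : ∃ s, s < (List.ofFn fun i => w i).length ∧ ((s : ℕ) : ZMod l) = c := by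
      haveI : NeZero l := ⟨by omega⟩
      refine ⟨(ZMod.val c), ?_, ?_⟩
      · simpa using ZMod.val_lt c
      · exact ZMod.natCast_rightInverse c
    rw [if_pos hyes]
    group

end Econ


section Normalize

variable (l : ℕ) (horb : ∀ j : Fin n, ∃! t : Fin r, ∃ σ ∈ H, σ (reps t) = j)

theorem exists_normal (hl : 2 ≤ l) (hsr : ∀ i : Fin n, ∀ σ ∈ H, σ i = i → σ = 1)
    (hab : ∀ σ ∈ H, ∀ τ ∈ H, σ * τ = τ * σ) :
    ∀ x : List (Fin n), ∃ y : List (Fin n), IsNormal l horb y ∧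
      permCon n l H (FreeMonoid.ofList x) (FreeMonoid.ofList y) := by
  intro x
  induction x with
  | nil => exact ⟨[], fun s h hs => by simp at h, Con.refl _ _⟩
  | cons j t ih =>
    obtain ⟨y', hy', hcy'⟩ := ih
    set z : List (Fin n) := j :: y' with hzdef
    have hcz : permCon n l H (FreeMonoid.ofList (j :: t)) (FreeMonoid.ofList z) := by
      have h1 : permCon n l H (FreeMonoid.of j * FreeMonoid.ofList t)
          (FreeMonoid.of j * FreeMonoid.ofList y') :=
        (permCon n l H).mul (Con.refl _ _) hcy'
      exact h1
    by_cases hz : l ≤ z.length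
    · set w : Fin l → Fin n := fun i => z[(i : ℕ)]'(lt_of_lt_of_le i.isLt hz) with hwdef
      set z₁ : List (Fin n) := List.ofFn w with hz₁def
      have hz₁len : z₁.length = l := by simp [hz₁def]
      have hz₁ : z₁ = z.take l := by
        refine List.ext_getElem (by simp [hz₁def]; omega) fun i h1 h2 => ?_
        simp [hz₁def, List.getElem_ofFn, List.getElem_take, hwdef]
      have hl1 : l - 1 < z.length := by omega
      set τ : Equiv.Perm (Fin n) := (compF horb (z[l-1]'hl1))⁻¹ with hτdef
      have hτ : τ ∈ H := H.inv_mem (compF_mem horb _)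
      have hrel : permRel n l H (FreeMonoid.ofList z₁) (FreeMonoid.ofList (z₁.map τ)) := by
        refine ⟨τ, hτ, w, rfl, ?_⟩
        rw [hz₁def, List.map_ofFn]
        rfl
      have hstep : permCon n l H (FreeMonoid.ofList z₁) (FreeMonoid.ofList (z₁.map τ)) :=
        ConGen.Rel.of _ _ hrel
      have hsplit : z₁ ++ z.drop l = z := by rw [hz₁, List.take_append_drop]
      set y : List (Fin n) := z₁.map τ ++ z.drop l with hydef
      have hcy : permCon n l H (FreeMonoid.ofList z) (FreeMonoid.ofList y) := by
        have h1 : permCon n l H (FreeMonoid.ofList (z₁ ++ z.drop l)) (FreeMonoid.ofList y) := by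
          rw [FreeMonoid.ofList_append, hydef, FreeMonoid.ofList_append]
          exact (permCon n l H).mul hstep (Con.refl _ _)
        rwa [hsplit] at h1
      refine ⟨y, ?_, (permCon n l H).trans hcz hcy⟩
      intro s h hs
      have hylen : y.length = z.length := by
        simp [hydef, hz₁len]
        omega
      by_cases hsl : s < l
      · have hseq : s = l - 1 := by omega
        subst hseq
        have hlt : l - 1 < (z₁.map τ).length := by simp [hz₁len]; omega
        have h1 : y[l-1] = (z₁.map τ)[l-1]'hlt := List.getElem_append_left hlt
        have h2 : (z₁.map τ)[l-1]'hlt = τ (z₁[l-1]'(by omega)) := List.getElem_map _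
        have h3 : z₁[l-1]'(by omega) = z[l-1]'hl1 := by
          simp [hz₁def, hwdef, List.getElem_ofFn]
        rw [h1, h2, h3, compF_apply horb hsr hτ]
        rw [hτdef]
        exact inv_mul_cancel _
      · have hsl' : l ≤ s := by omega
        have hslen : s - l < (z.drop l).length := by
          simp only [List.length_drop]
          omega
        have h1 : y[s] = (z.drop l)[s - l]'hslen := by
          simp only [hydef]
          rw [List.getElem_append_right (show (z₁.map ⇑τ).length ≤ s by simp [hz₁len]; omega)]
          congr 1
          simp [hz₁len]
        have h2 : (z.drop l)[s - l]'hslen = z[l + (s - l)]'(by omega) := List.getElem_drop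
        have h3 : z[l + (s - l)]'(by omega) = z[s]'(by omega) := by
          congr 1
          omega
        obtain ⟨s', rfl⟩ : ∃ s', s = s' + 1 := ⟨s - 1, by omega⟩
        have h4 : z[s' + 1]'(by omega) = y'[s']'(by
            have : z.length = y'.length + 1 := by simp [hzdef]
            omega) := by
          simp [hzdef]
        rw [h1, h2, h3, h4]
        exact hy' s' _ (by omega)
    · refine ⟨z, ?_, hcz⟩
      intro s h hs
      exact absurd hs (by omega)

end Normalize


section Enc

variable (l : ℕ) (horb : ∀ j : Fin n, ∃! t : Fin r, ∃ σ ∈ H, σ (reps t) = j)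

/-- The list of generators encoded by a basis index. -/
def encL (reps : Fin r → Fin n) : BasisIdx n l r H → List (Fin n)
  | Sum.inl _ => []
  | Sum.inr ⟨_, j, t, σ⟩ => List.ofFn j ++ [(σ.1 : Equiv.Perm (Fin n)) (reps t)]

/-- The normal-form word encoded by a pair of a basis index and a word in the
representatives. -/
def NwL (reps : Fin r → Fin n) (p : BasisIdx n l r H × FreeMonoid (Fin r)) : List (Fin n) :=
  encL l reps p.1 ++ (FreeMonoid.toList p.2).map reps

theorem encL_length_le (hl : 2 ≤ l) (b : BasisIdx n l r H) :
    (encL l reps b).length ≤ l - 1 := by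
  match b with
  | Sum.inl _ => simp [encL]
  | Sum.inr ⟨k, j, t, σ⟩ =>
    have := k.isLt
    simp [encL]

theorem NwL_normal (hl : 2 ≤ l) (hsr : ∀ i : Fin n, ∀ σ ∈ H, σ i = i → σ = 1)
    (p : BasisIdx n l r H × FreeMonoid (Fin r)) : IsNormal l horb (NwL l reps p) := by
  intro s h hs
  have hge : (encL l reps p.1).length ≤ s := le_trans (encL_length_le l hl p.1) hs
  have h2 : (NwL l reps p)[s] =
      ((FreeMonoid.toList p.2).map reps)[s - (encL l reps p.1).length]'(by
        simp only [NwL, List.length_append, List.length_map] at h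
        simp only [List.length_map]
        omega) := List.getElem_append_right hge
  rw [h2, List.getElem_map]
  exact compF_reps horb hsr _

theorem NwL_getElem_k (k : Fin (l-1)) (j : Fin (k : ℕ) → Fin n) (t : Fin r)
    (σ : {σ : H // σ ≠ 1}) (w : FreeMonoid (Fin r))
    (h : (k : ℕ) < (NwL l reps (Sum.inr ⟨k, j, t, σ⟩, w)).length) :
    (NwL l reps (Sum.inr ⟨k, j, t, σ⟩, w))[(k : ℕ)] = (σ.1 : Equiv.Perm (Fin n)) (reps t) := by
  have hlt : (k : ℕ) < (encL l reps (Sum.inr ⟨k, j, t, σ⟩)).length := by simp [encL]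
  have h1 : (NwL l reps (Sum.inr ⟨k, j, t, σ⟩, w))[(k : ℕ)] =
      (encL l reps (Sum.inr ⟨k, j, t, σ⟩))[(k : ℕ)]'hlt := List.getElem_append_left hlt
  rw [h1]
  simp [encL]

theorem NwL_getElem_lt (k : Fin (l-1)) (j : Fin (k : ℕ) → Fin n) (t : Fin r)
    (σ : {σ : H // σ ≠ 1}) (w : FreeMonoid (Fin r)) (i : ℕ) (hik : i < (k : ℕ))
    (h : i < (NwL l reps (Sum.inr ⟨k, j, t, σ⟩, w)).length) :
    (NwL l reps (Sum.inr ⟨k, j, t, σ⟩, w))[i] = j ⟨i, hik⟩ := by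
  have hlt : i < (encL l reps (Sum.inr ⟨k, j, t, σ⟩)).length := by simp [encL]; omega
  have h1 : (NwL l reps (Sum.inr ⟨k, j, t, σ⟩, w))[i] =
      (encL l reps (Sum.inr ⟨k, j, t, σ⟩))[i]'hlt := List.getElem_append_left hlt
  rw [h1]
  simp [encL, hik]

theorem NwL_length_eq (p : BasisIdx n l r H × FreeMonoid (Fin r)) :
    (NwL l reps p).length = (encL l reps p.1).length + (FreeMonoid.toList p.2).length := by
  simp [NwL]

/-- The `H`-component of the `NwL`-letter in the suffix part is trivial. -/
theorem compF_NwL_suffix (hsr : ∀ i : Fin n, ∀ σ ∈ H, σ i = i → σ = 1)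
    (p : BasisIdx n l r H × FreeMonoid (Fin r)) (s : ℕ)
    (hge : (encL l reps p.1).length ≤ s) (h : s < (NwL l reps p).length) :
    compF horb ((NwL l reps p)[s]) = 1 := by
  have h2 : (NwL l reps p)[s] =
      ((FreeMonoid.toList p.2).map reps)[s - (encL l reps p.1).length]'(by
        simp only [NwL, List.length_append, List.length_map] at h
        simp only [List.length_map]
        omega) := List.getElem_append_right hge
  rw [h2, List.getElem_map]
  exact compF_reps horb hsr _

theorem sigma_perm_ne_one (σ : {σ : H // σ ≠ 1}) : (σ.1 : Equiv.Perm (Fin n)) ≠ 1 := by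
  intro h
  exact σ.2 (by ext1; exact congrArg (fun p => p) h)

theorem compF_NwL_k (hsr : ∀ i : Fin n, ∀ σ ∈ H, σ i = i → σ = 1) (k : Fin (l-1))
    (j : Fin (k : ℕ) → Fin n) (t : Fin r) (σ : {σ : H // σ ≠ 1}) (w : FreeMonoid (Fin r))
    (h : (k : ℕ) < (NwL l reps (Sum.inr ⟨k, j, t, σ⟩, w)).length) :
    compF horb ((NwL l reps (Sum.inr ⟨k, j, t, σ⟩, w))[(k : ℕ)]) =
      (σ.1 : Equiv.Perm (Fin n)) := by
  rw [NwL_getElem_k, compF_apply horb hsr σ.1.2, compF_reps horb hsr, mul_one]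

theorem toList_map_inj (horb' : ∀ j : Fin n, ∃! t : Fin r, ∃ σ ∈ H, σ (reps t) = j)
    {w w' : FreeMonoid (Fin r)}
    (h : (FreeMonoid.toList w).map reps = (FreeMonoid.toList w').map reps) : w = w' := by
  have h1 : FreeMonoid.toList w = FreeMonoid.toList w' :=
    List.map_injective_iff.mpr (reps_injective horb') h
  have h2 := congrArg FreeMonoid.ofList h1
  rwa [FreeMonoid.ofList_toList, FreeMonoid.ofList_toList] at h2

include horb in
theorem NwL_inj (hl : 2 ≤ l) (hsr : ∀ i : Fin n, ∀ σ ∈ H, σ i = i → σ = 1) :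
    Function.Injective (NwL (H := H) l reps) := by
  have haux : ∀ (b b' : BasisIdx n l r H) (w w' : FreeMonoid (Fin r)),
      NwL l reps (b, w) = NwL l reps (b', w') →
      (encL l reps b).length < (encL l reps b').length → False := by
    intro b b' w w' heq hlt
    match b' with
    | Sum.inl _ => simp [encL] at hlt
    | Sum.inr ⟨k', j', t', σ'⟩ =>
      have hk' : (encL l reps ((Sum.inr ⟨k', j', t', σ'⟩ : BasisIdx n l r H))).length = (k' : ℕ) + 1 := by
        simp [encL]
      have hge : (encL l reps b).length ≤ (k' : ℕ) := by omega
      have hlen2 : (k' : ℕ) < (NwL l reps ((Sum.inr ⟨k', j', t', σ'⟩ : BasisIdx n l r H), w')).length := by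
        simp only [NwL_length_eq]
        simp [encL]
        omega
      have hlen1 : (k' : ℕ) < (NwL l reps (b, w)).length := by rw [heq]; exact hlen2
      have h1 : compF horb ((NwL l reps (b, w))[(k' : ℕ)]) = 1 :=
        compF_NwL_suffix l horb hsr _ _ hge hlen1
      have h2 : compF horb ((NwL l reps ((Sum.inr ⟨k', j', t', σ'⟩ : BasisIdx n l r H), w'))[(k' : ℕ)]) =
          (σ'.1 : Equiv.Perm (Fin n)) := compF_NwL_k l horb hsr _ _ _ _ _ hlen2
      have h3 : (NwL l reps (b, w))[(k' : ℕ)]'hlen1 =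
          (NwL l reps ((Sum.inr ⟨k', j', t', σ'⟩ : BasisIdx n l r H), w'))[(k' : ℕ)]'hlen2 := by
        congr 1
      rw [h3, h2] at h1
      exact sigma_perm_ne_one σ' h1
  intro p p' heq
  obtain ⟨b, w⟩ := p
  obtain ⟨b', w'⟩ := p'
  have hklen : (encL l reps b).length = (encL l reps b').length := by
    rcases lt_trichotomy (encL l reps b).length (encL l reps b').length with h | h | h
    · exact (haux b b' w w' heq h).elim
    · exact h
    · exact (haux b' b w' w heq.symm h).elim
  have htails : (FreeMonoid.toList w).map reps = (FreeMonoid.toList w').map reps →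
      w = w' := fun h => toList_map_inj horb h
  match b, b' with
  | Sum.inl u, Sum.inl u' =>
    have hw : w = w' := htails (by simpa [NwL, encL] using heq)
    cases u; cases u'; rw [hw]
  | Sum.inl u, Sum.inr ⟨k', j', t', σ'⟩ => simp [encL] at hklen
  | Sum.inr ⟨k, j, t, σ⟩, Sum.inl u => simp [encL] at hklen
  | Sum.inr ⟨k, j, t, σ⟩, Sum.inr ⟨k', j', t', σ'⟩ =>
    have hkk' : k = k' := by
      simp only [encL, List.length_append, List.length_ofFn, List.length_singleton] at hklen
      exact Fin.ext (by omega)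
    subst hkk'
    -- position k: the special letters agree
    have hlenk : (k : ℕ) < (NwL l reps ((Sum.inr ⟨k, j, t, σ⟩ : BasisIdx n l r H), w)).length := by
      rw [NwL_length_eq]; simp [encL]; omega
    have hlenk' : (k : ℕ) < (NwL l reps ((Sum.inr ⟨k, j', t', σ'⟩ : BasisIdx n l r H), w')).length := by
      rw [NwL_length_eq]; simp [encL]; omega
    have hx : (σ.1 : Equiv.Perm (Fin n)) (reps t) = (σ'.1 : Equiv.Perm (Fin n)) (reps t') := by
      rw [← NwL_getElem_k l (reps := reps) k j t σ w hlenk,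
        ← NwL_getElem_k l (reps := reps) k j' t' σ' w' hlenk']
      congr 1
    have ht : t = t' := by
      have h1 := orbF_apply horb σ.1.2 (reps t)
      have h2 := orbF_apply horb σ'.1.2 (reps t')
      rw [hx] at h1
      rw [h1] at h2
      rwa [orbF_reps horb, orbF_reps horb] at h2
    subst ht
    have hσ : σ = σ' := by
      have h1 := compF_apply horb hsr σ.1.2 (reps t)
      have h2 := compF_apply horb hsr σ'.1.2 (reps t)
      rw [hx] at h1
      rw [h1] at h2
      rw [compF_reps horb hsr, mul_one, mul_one] at h2
      exact Subtype.ext (Subtype.ext h2)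
    subst hσ
    have hj : j = j' := by
      funext i
      have hb1 : (i : ℕ) < (NwL l reps ((Sum.inr ⟨k, j, t, σ⟩ : BasisIdx n l r H), w)).length := by
        rw [NwL_length_eq]; simp [encL]; omega
      have hb2 : (i : ℕ) < (NwL l reps ((Sum.inr ⟨k, j', t, σ⟩ : BasisIdx n l r H), w')).length := by
        rw [NwL_length_eq]; simp [encL]; omega
      have h1 := NwL_getElem_lt l (reps := reps) k j t σ w (i : ℕ) i.isLt hb1
      have h2 := NwL_getElem_lt l (reps := reps) k j' t σ w' (i : ℕ) i.isLt hb2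
      have helem : (NwL l reps ((Sum.inr ⟨k, j, t, σ⟩ : BasisIdx n l r H), w))[(i : ℕ)]'hb1 =
          (NwL l reps ((Sum.inr ⟨k, j', t, σ⟩ : BasisIdx n l r H), w'))[(i : ℕ)]'hb2 := by
        congr 1
      have h3 := h1.symm.trans (helem.trans h2)
      simpa using h3
    subst hj
    have hw : w = w' := by
      refine htails ?_
      have := heq
      simp only [NwL] at this
      exact List.append_cancel_left this
    rw [hw]

theorem NwL_surj (hl : 2 ≤ l) (hsr : ∀ i : Fin n, ∀ σ ∈ H, σ i = i → σ = 1)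
    (y : List (Fin n)) (hy : IsNormal l horb y) :
    ∃ p : BasisIdx n l r H × FreeMonoid (Fin r), NwL l reps p = y := by
  classical
  by_cases hex : ∃ s : ℕ, ∃ h : s < y.length, compF horb y[s] ≠ 1
  · set P : ℕ → Prop := fun s => ∃ h : s < y.length, compF horb y[s] ≠ 1 with hPdef
    obtain ⟨s₀, hs₀⟩ := hex
    set k := Nat.findGreatest P y.length with hkdef
    have hPk : P k := Nat.findGreatest_spec (m := s₀) (le_of_lt hs₀.1) hs₀
    obtain ⟨hky, hkc⟩ := hPk
    have hmax : ∀ s (h : s < y.length), k < s → compF horb y[s] = 1 := by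
      intro s hsy hks
      by_contra hne
      exact Nat.findGreatest_is_greatest hks (le_of_lt hsy) ⟨hsy, hne⟩
    have hkl : k < l - 1 := by
      by_contra h
      exact hkc (hy k hky (by omega))
    refine ⟨(Sum.inr ⟨⟨k, hkl⟩, fun i => y[(i : ℕ)]'(by have h4 := i.isLt; have h5 : ((⟨k, hkl⟩ : Fin (l-1)) : ℕ) = k := rfl; omega),
      orbF horb y[k], ⟨⟨compF horb y[k], compF_mem horb _⟩, fun h => hkc (congrArg Subtype.val h)⟩⟩,
      FreeMonoid.ofList ((y.drop (k+1)).map (orbF horb))), ?_⟩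
    simp only [NwL, encL, FreeMonoid.toList_ofList]
    have h1 : List.ofFn (fun i : Fin (((⟨k, hkl⟩ : Fin (l-1)) : ℕ)) =>
        y[(i : ℕ)]'(by have h4 := i.isLt; have h5 : ((⟨k, hkl⟩ : Fin (l-1)) : ℕ) = k := rfl; omega)) = y.take k := by
      refine List.ext_getElem (by simp; omega) fun i hi1 hi2 => ?_
      simp [List.getElem_ofFn, List.getElem_take]
    have h2 : (compF horb y[k]) (reps (orbF horb y[k])) = y[k] := compF_spec horb _
    have h3 : ((y.drop (k+1)).map (orbF horb)).map reps = y.drop (k+1) := by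
      rw [List.map_map]
      refine List.ext_getElem (by simp) fun i hi1 hi2 => ?_
      have hidx : k + 1 + i < y.length := by simp at hi2; omega
      have hd : (y.drop (k+1))[i]'hi2 = y[k+1+i]'hidx := List.getElem_drop
      simp only [List.getElem_map, Function.comp_apply, hd]
      exact eq_reps_of_compF_eq_one horb (hmax _ hidx (by omega))
    rw [h1, h2, h3]
    rw [List.append_assoc, List.singleton_append, ← List.drop_eq_getElem_cons hky,
      List.take_append_drop]
  · push_neg at hex
    refine ⟨(Sum.inl (), FreeMonoid.ofList (y.map (orbF horb))), ?_⟩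
    simp only [NwL, encL, FreeMonoid.toList_ofList, List.nil_append, List.map_map]
    refine List.ext_getElem (by simp) fun i hi1 hi2 => ?_
    simp only [List.getElem_map, Function.comp_apply]
    exact eq_reps_of_compF_eq_one horb (hex i hi2)


end Enc


section Final

variable (l : ℕ) (horb : ∀ j : Fin n, ∃! t : Fin r, ∃ σ ∈ H, σ (reps t) = j)

/-- The underlying map of the basis-index bijection. -/
noncomputable def eFun (reps : Fin r → Fin n) :
    BasisIdx n l r H × FreeMonoid (Fin r) → SM n l H :=
  fun p => (permCon n l H).mk' (FreeMonoid.ofList (NwL l reps p))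

include horb in
theorem eFun_bij (hl : 2 ≤ l) (hsr : ∀ i : Fin n, ∀ σ ∈ H, σ i = i → σ = 1)
    (hab : ∀ σ ∈ H, ∀ τ ∈ H, σ * τ = τ * σ) :
    Function.Bijective (eFun (H := H) l reps) := by
  constructor
  · intro p p' h
    have h1 : permCon n l H (FreeMonoid.ofList (NwL l reps p))
        (FreeMonoid.ofList (NwL l reps p')) := ((permCon n l H).eq).mp h
    have h2 := (permCon_le_Econ l horb hl hsr hab) h1
    obtain ⟨hmap, hP⟩ := h2
    rw [FreeMonoid.toList_ofList, FreeMonoid.toList_ofList] at hmap hP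
    exact NwL_inj (l := l) (horb := horb) hl hsr
      (normal_unique l horb hl hsr (NwL_normal l horb hl hsr p) (NwL_normal l horb hl hsr p')
        hmap hP)
  · intro s
    obtain ⟨x, rfl⟩ := Con.mk'_surjective (c := permCon n l H) s
    obtain ⟨y, hy, hcy⟩ := exists_normal l horb hl hsr hab x.toList
    obtain ⟨p, hp⟩ := NwL_surj l horb hl hsr y hy
    refine ⟨p, ?_⟩
    show (permCon n l H).mk' (FreeMonoid.ofList (NwL l reps p)) = (permCon n l H).mk' x
    rw [hp]
    rw [FreeMonoid.ofList_toList] at hcy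
    exact ((permCon n l H).eq).mpr ((permCon n l H).symm hcy)

theorem map_xg_prod (lst : List (Fin n)) :
    (lst.map (xg n l H)).prod = (permCon n l H).mk' (FreeMonoid.ofList lst) := by
  induction lst with
  | nil =>
    rw [List.map_nil, List.prod_nil]
    have : FreeMonoid.ofList ([] : List (Fin n)) = 1 := rfl
    rw [this, map_one]
  | cons a t ih =>
    rw [List.map_cons, List.prod_cons, ih]
    have h1 : FreeMonoid.ofList (a :: t) = FreeMonoid.of a * FreeMonoid.ofList t := rfl
    rw [h1, map_mul]
    rfl

theorem basisElem_eq (K : Type) [Field K] (b : BasisIdx n l r H) :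
    basisElem K n l r H reps b =
      MonoidAlgebra.single ((permCon n l H).mk' (FreeMonoid.ofList (encL l reps b))) 1 := by
  match b with
  | Sum.inl u =>
    show (1 : MonoidAlgebra K (SM n l H)) = _
    have h0 : (permCon n l H).mk' (FreeMonoid.ofList ([] : List (Fin n))) = 1 := map_one _
    rw [show encL l reps (Sum.inl u : BasisIdx n l r H) = ([] : List (Fin n)) from rfl, h0,
      ← MonoidAlgebra.one_def]
  | Sum.inr ⟨k, j, t, σ⟩ =>
    show MonoidAlgebra.of K (SM n l H) ((List.map (xg n l H) (List.ofFn j)).prod *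
      xg n l H ((σ.1 : Equiv.Perm (Fin n)) (reps t))) = _
    rw [MonoidAlgebra.of_apply, map_xg_prod]
    have h1 : encL l reps (Sum.inr ⟨k, j, t, σ⟩ : BasisIdx n l r H) =
        List.ofFn j ++ [(σ.1 : Equiv.Perm (Fin n)) (reps t)] := rfl
    rw [h1, FreeMonoid.ofList_append, map_mul]
    rfl

end Final


section Main

variable (l : ℕ) (horb : ∀ j : Fin n, ∃! t : Fin r, ∃ σ ∈ H, σ (reps t) = j)

include horb in
theorem main_bijective (hl : 2 ≤ l) (hsr : ∀ i : Fin n, ∀ σ ∈ H, σ i = i → σ = 1)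
    (hab : ∀ σ ∈ H, ∀ τ ∈ H, σ * τ = τ * σ) (K : Type) [Field K] :
    Function.Bijective (fun g : BasisIdx n l r H →₀ FreeAlgebra K (Fin r) =>
      g.sum fun b c => basisElem K n l r H reps b *
        (FreeAlgebra.lift K fun t =>
          MonoidAlgebra.of K (SM n l H) (xg n l H (reps t))) c) := by
  classical
  set L : FreeAlgebra K (Fin r) →ₐ[K] MonoidAlgebra K (SM n l H) :=
    FreeAlgebra.lift K fun t => MonoidAlgebra.of K (SM n l H) (xg n l H (reps t)) with hL
  set ρ : FreeMonoid (Fin r) →* SM n l H :=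
    ((permCon n l H).mk').comp (FreeMonoid.map reps) with hρ
  set eE : (BasisIdx n l r H × FreeMonoid (Fin r)) ≃ SM n l H :=
    Equiv.ofBijective _ (eFun_bij (l := l) (horb := horb) hl hsr hab) with heE
  set EQ : FreeAlgebra K (Fin r) ≃ₐ[K] MonoidAlgebra K (FreeMonoid (Fin r)) :=
    FreeAlgebra.equivMonoidAlgebraFreeMonoid with hEQ
  have hEQι : ∀ a : Fin r,
      EQ.symm (MonoidAlgebra.single (FreeMonoid.of a) 1) = FreeAlgebra.ι K a := by
    intro a
    rw [AlgEquiv.symm_apply_eq]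
    symm
    simp [hEQ, FreeAlgebra.equivMonoidAlgebraFreeMonoid]
  have hg1 : ∀ lst : List (Fin r),
      L (EQ.symm (MonoidAlgebra.single (FreeMonoid.ofList lst) 1)) =
        MonoidAlgebra.single (ρ (FreeMonoid.ofList lst)) 1 := by
    intro lst
    induction lst with
    | nil =>
      have h1 : FreeMonoid.ofList ([] : List (Fin r)) = 1 := rfl
      rw [h1, ← MonoidAlgebra.one_def, map_one, map_one, map_one, MonoidAlgebra.one_def]
    | cons a t ih =>
      have h1 : FreeMonoid.ofList (a :: t) = FreeMonoid.of a * FreeMonoid.ofList t := rfl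
      have h2 : MonoidAlgebra.single (FreeMonoid.of a * FreeMonoid.ofList t) (1 : K) =
          MonoidAlgebra.single (FreeMonoid.of a) 1 *
            MonoidAlgebra.single (FreeMonoid.ofList t) 1 := by
        rw [MonoidAlgebra.single_mul_single, mul_one]
      rw [h1, h2, map_mul, map_mul, hEQι, ih]
      have h3 : L (FreeAlgebra.ι K a) = MonoidAlgebra.single (xg n l H (reps a)) 1 := by
        rw [hL, FreeAlgebra.lift_ι_apply, MonoidAlgebra.of_apply]
      rw [h3, MonoidAlgebra.single_mul_single, one_mul, map_mul]
      congr 2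
  have hg : ∀ (w : FreeMonoid (Fin r)) (kk : K),
      L (EQ.symm (MonoidAlgebra.single w kk)) = MonoidAlgebra.single (ρ w) kk := by
    intro w kk
    have h0 := hg1 (FreeMonoid.toList w)
    rw [FreeMonoid.ofList_toList] at h0
    have h1 : MonoidAlgebra.single w kk = kk • MonoidAlgebra.single w (1 : K) := by
      rw [MonoidAlgebra.smul_single', mul_one]
    rw [h1, map_smul, map_smul, h0, MonoidAlgebra.smul_single', mul_one]
  have heB : ∀ (b : BasisIdx n l r H) (w : FreeMonoid (Fin r)),
      eE (b, w) = (permCon n l H).mk' (FreeMonoid.ofList (encL l reps b)) * ρ w := by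
    intro b w
    show eFun l reps (b, w) = _
    show (permCon n l H).mk' (FreeMonoid.ofList (NwL l reps (b, w))) = _
    have h1 : NwL l reps (b, w) = encL l reps b ++ (FreeMonoid.toList w).map reps := rfl
    rw [h1, FreeMonoid.ofList_append, map_mul]
    congr 1
  set Flin : (BasisIdx n l r H →₀ FreeAlgebra K (Fin r)) →ₗ[K] MonoidAlgebra K (SM n l H) :=
    Finsupp.lsum K (fun b =>
      (LinearMap.mulLeft K (basisElem K n l r H reps b)).comp L.toLinearMap) with hFlin
  set S1 : (BasisIdx n l r H →₀ MonoidAlgebra K (FreeMonoid (Fin r))) ≃ₗ[K]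
      (BasisIdx n l r H →₀ FreeAlgebra K (Fin r)) :=
    Finsupp.mapRange.linearEquiv EQ.symm.toLinearEquiv with hS1
  set S2 : (BasisIdx n l r H →₀ MonoidAlgebra K (FreeMonoid (Fin r))) ≃ₗ[K]
      ((BasisIdx n l r H × FreeMonoid (Fin r)) →₀ K) :=
    (Finsupp.mapRange.linearEquiv (MonoidAlgebra.coeffLinearEquiv K)).trans
      (Finsupp.curryLinearEquiv K).symm with hS2
  set S3 : ((BasisIdx n l r H × FreeMonoid (Fin r)) →₀ K) ≃ₗ[K] MonoidAlgebra K (SM n l H) :=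
    (Finsupp.domLCongr eE).trans (MonoidAlgebra.coeffLinearEquiv K).symm with hS3
  have hcomp : Flin ∘ₗ S1.toLinearMap = S3.toLinearMap ∘ₗ S2.toLinearMap := by
    apply Finsupp.lhom_ext'
    intro b
    apply MonoidAlgebra.lhom_ext'
    intro w
    apply LinearMap.ext
    intro kk
    show Flin (S1 (Finsupp.single b (MonoidAlgebra.single w kk))) =
      S3 (S2 (Finsupp.single b (MonoidAlgebra.single w kk)))
    have hS1s : S1 (Finsupp.single b (MonoidAlgebra.single w kk)) =
        Finsupp.single b (EQ.symm (MonoidAlgebra.single w kk)) := by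
      rw [hS1]
      exact Finsupp.mapRange_single (hf := map_zero _)
    have hS2s : S2 (Finsupp.single b (MonoidAlgebra.single w kk)) =
        Finsupp.single ((b, w) : BasisIdx n l r H × FreeMonoid (Fin r)) kk := by
      rw [hS2, LinearEquiv.trans_apply, LinearEquiv.symm_apply_eq]
      simp [MonoidAlgebra.coeffLinearEquiv_apply, MonoidAlgebra.coeff_single,
        Finsupp.curry_single]
    rw [hS1s, hS2s]
    have hFs : Flin (Finsupp.single b (EQ.symm (MonoidAlgebra.single w kk))) =
        basisElem K n l r H reps b * L (EQ.symm (MonoidAlgebra.single w kk)) := by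
      rw [hFlin, Finsupp.lsum_single]
      rfl
    rw [hFs, hg w kk, basisElem_eq (l := l) (reps := reps) K b,
      MonoidAlgebra.single_mul_single, one_mul, ← heB b w]
    rw [hS3]
    simp [Finsupp.domLCongr_apply, Finsupp.domCongr_apply, Finsupp.equivMapDomain_single]
  have hFfun : (fun g : BasisIdx n l r H →₀ FreeAlgebra K (Fin r) =>
      g.sum fun b c => basisElem K n l r H reps b * L c) = ⇑S3 ∘ ⇑S2 ∘ ⇑S1.symm := by
    funext g
    have h1 : (g.sum fun b c => basisElem K n l r H reps b * L c) = Flin g := by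
      rw [hFlin, Finsupp.lsum_apply]
      rfl
    have h2 : Flin g = Flin (S1 (S1.symm g)) := by rw [LinearEquiv.apply_symm_apply]
    have h3 := DFunLike.congr_fun hcomp (S1.symm g)
    simp only [LinearMap.comp_apply, LinearEquiv.coe_coe] at h3
    rw [h1, h2, h3]
    rfl
  rw [hFfun]
  exact S3.bijective.comp (S2.bijective.comp S1.symm.bijective)

end Main


end SnlHAux


theorem free_module_over_free_algebra (n l : ℕ) (hl : 2 ≤ l) (H : Subgroup (Equiv.Perm (Fin n)))
    (hsr : ∀ i : Fin n, ∀ σ ∈ H, σ i = i → σ = 1)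
    (hab : ∀ σ ∈ H, ∀ τ ∈ H, σ * τ = τ * σ)
    (hnt : ¬ ∀ i j : Fin n, ∃ σ ∈ H, σ i = j)
    (r : ℕ) (hr : 1 < r) (reps : Fin r → Fin n)
    (horb : ∀ j : Fin n, ∃! t : Fin r, ∃ σ ∈ H, σ (reps t) = j)
    (K : Type) [Field K] :
    Finite (BasisIdx n l r H) ∧
    Function.Bijective (fun g : BasisIdx n l r H →₀ FreeAlgebra K (Fin r) =>
      g.sum fun b c => basisElem K n l r H reps b *
        (FreeAlgebra.lift K fun t =>
          MonoidAlgebra.of K (SM n l H) (xg n l H (reps t))) c) := by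
  constructor
  · show Finite (Unit ⊕ (Σ k : Fin (l - 1), (Fin (k : ℕ) → Fin n) × (Fin r × {σ : H // σ ≠ 1})))
    infer_instance
  · exact SnlHAux.main_bijective (l := l) (horb := horb) hl hsr hab K
end
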